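/- arXiv:1710.09206 — 10 statements merged into one kernel-verified Lean document; each statement's English description precedes it below -/
import Mathlib

section
/- Let S and T be closed, symmetric, densely defined operators on a complex Hilbert space H such that D(S) ∩ D(T) is dense in H. The operator S + T restricted to D(S) ∩ D(T) is symmetric and densely defined, hence closable; let D(S+T) denote the domain of its closure, i.e. the closure of D(S) ∩ D(T) with respect to the graph norm ψ ↦ (‖ψ‖² + ‖(S+T)ψ‖²)^{1/2}. If D(S+T) ⊆ D(S), then also D(S+T) ⊆ D(T), and therefore D(S+T) ⊆ D(S) ∩ D(T). [Hilbert-space case of Lemma 2.3 (dom_sum).] -/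
open Filter Topology

/-- Hilbert-space case of Lemma 2.3, `dom_sum`.
`S` and `T` are closed, symmetric, densely defined operators on `H`, encoded as total linear
maps together with their domain submodules `DS`, `DT` (the maps are only used on their domains;
closedness and symmetry are stated relative to the domains).  `D(S)∩D(T)` is dense.
The domain `D(S+T)` of the closure of `S + T` (defined on `DS ⊓ DT`) consists of those `ψ`
admitting a sequence `u n ∈ DS ⊓ DT` with `u n → ψ` and `(S + T)(u n)` convergent.
If `D(S+T) ⊆ DS`, then `D(S+T) ⊆ DT` (hence `D(S+T) ⊆ DS ⊓ DT`). -/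
theorem dom_sum
    {H : Type*} [NormedAddCommGroup H] [InnerProductSpace ℂ H] [CompleteSpace H]
    (S T : H →ₗ[ℂ] H) (DS DT : Submodule ℂ H)
    (h_dense : Dense ((DS ⊓ DT : Submodule ℂ H) : Set H))
    (hS_symm : ∀ ψ ∈ DS, ∀ φ ∈ DS, (inner ℂ (S ψ) φ : ℂ) = inner ℂ ψ (S φ))
    (hT_symm : ∀ ψ ∈ DT, ∀ φ ∈ DT, (inner ℂ (T ψ) φ : ℂ) = inner ℂ ψ (T φ))
    (hS_closed : ∀ (u : ℕ → H) (ψ χ : H), (∀ n, u n ∈ DS) →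
      Tendsto u atTop (𝓝 ψ) → Tendsto (fun n => S (u n)) atTop (𝓝 χ) →
      ψ ∈ DS ∧ S ψ = χ)
    (hT_closed : ∀ (u : ℕ → H) (ψ χ : H), (∀ n, u n ∈ DT) →
      Tendsto u atTop (𝓝 ψ) → Tendsto (fun n => T (u n)) atTop (𝓝 χ) →
      ψ ∈ DT ∧ T ψ = χ)
    (h_sub : ∀ ψ : H, (∃ u : ℕ → H, (∀ n, u n ∈ DS ⊓ DT) ∧
        Tendsto u atTop (𝓝 ψ) ∧
        ∃ χ : H, Tendsto (fun n => S (u n) + T (u n)) atTop (𝓝 χ)) → ψ ∈ DS) :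
    ∀ ψ : H, (∃ u : ℕ → H, (∀ n, u n ∈ DS ⊓ DT) ∧
        Tendsto u atTop (𝓝 ψ) ∧
        ∃ χ : H, Tendsto (fun n => S (u n) + T (u n)) atTop (𝓝 χ)) → ψ ∈ DT := by

  classical
  set A : H →ₗ[ℂ] H := S + T with hA
  set G : Submodule ℂ (H × H) :=
    Submodule.map (LinearMap.prod LinearMap.id A) (DS ⊓ DT) with hG
  set E : Submodule ℂ (H × H) := G.topologicalClosure with hE
  have hEclosed : IsClosed (E : Set (H × H)) := G.isClosed_topologicalClosure
  haveI : CompleteSpace E := hEclosed.completeSpace_coe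
  -- every element of E has first coordinate in DS
  have key : ∀ p : H × H, p ∈ E → p.1 ∈ DS := by
    intro p hp
    obtain ⟨v, hvG, hvlim⟩ := mem_closure_iff_seq_limit.1 hp
    choose u hu huv using fun n => Submodule.mem_map.1 (hvG n)
    have h1 : Tendsto (fun n => (v n).1) atTop (𝓝 p.1) :=
      (continuous_fst.tendsto p).comp hvlim
    have h2 : Tendsto (fun n => (v n).2) atTop (𝓝 p.2) :=
      (continuous_snd.tendsto p).comp hvlim
    refine h_sub p.1 ⟨u, hu, ?_, p.2, ?_⟩
    · have : ∀ n, u n = (v n).1 := fun n => by rw [← huv n]; rfl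
      simpa [funext this] using h1
    · have : ∀ n, S (u n) + T (u n) = (v n).2 := fun n => by
        rw [← huv n]; simp [hA]
      simpa [funext this] using h2
  -- the restriction of S (on first coordinates) to E
  let Φ : E →ₗ[ℂ] H := (S.comp (LinearMap.fst ℂ H H)).comp E.subtype
  have hΦcont : Continuous Φ := by
    apply LinearMap.continuous_of_seq_closed_graph
    intro w x y hwx hwy
    have hcoe : Tendsto (fun n => ((w n : H × H)).1) atTop (𝓝 (x : H × H).1) :=
      (continuous_fst.tendsto _).comp ((continuous_subtype_val.tendsto x).comp hwx)
    have hmem : ∀ n, ((w n : H × H)).1 ∈ DS := fun n => key _ (w n).2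
    have hS := hS_closed (fun n => ((w n : H × H)).1) (x : H × H).1 y hmem hcoe hwy
    exact hS.2.symm
  -- now the main argument
  intro ψ ⟨u, hu, hψ, χ, hχ⟩
  have hGmem : ∀ n, ((u n, S (u n) + T (u n)) : H × H) ∈ E := fun n =>
    Submodule.le_topologicalClosure G
      (Submodule.mem_map.2 ⟨u n, hu n, by simp [hA, LinearMap.prod_apply]⟩)
  have hplim : Tendsto (fun n => ((u n, S (u n) + T (u n)) : H × H)) atTop (𝓝 (ψ, χ)) :=
    hψ.prodMk_nhds hχ
  have hψχ : ((ψ, χ) : H × H) ∈ E :=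
    hEclosed.mem_of_tendsto hplim (Filter.Eventually.of_forall hGmem)
  set w : ℕ → E := fun n => ⟨(u n, S (u n) + T (u n)), hGmem n⟩ with hw
  have hwlim : Tendsto w atTop (𝓝 (⟨(ψ, χ), hψχ⟩ : E)) := by
    rw [tendsto_subtype_rng]
    exact hplim
  have hSlim : Tendsto (fun n => S (u n)) atTop (𝓝 (S ψ)) := by
    have := (hΦcont.tendsto _).comp hwlim
    simpa [Φ, hw, Function.comp_def] using this
  have hTlim : Tendsto (fun n => T (u n)) atTop (𝓝 (χ - S ψ)) := by
    have := hχ.sub hSlim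
    simpa using this
  exact (hT_closed u ψ (χ - S ψ) (fun n => (hu n).2) hψ hTlim).1
end

section
/- Assume the family {S(x)}_{x∈X} satisfies assumption (a2). Then: (i) for every compactly supported continuous map ψ : X → (W, ‖·‖_W), the map x ↦ S(x)ψ(x) from X to H is continuous and compactly supported; (ii) the set of functions x ↦ (S(x)+i)ψ(x), as ψ ranges over all compactly supported continuous maps X → (W, ‖·‖_W), is dense in the Banach space C₀(X,H) with the supremum norm. [Hilbert-space content of Lemma 3.2 (pS_reg-sa): C_c(X,W) is a core on which the family defines an essentially self-adjoint operator on C₀(X,H).] -/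
open Filter Topology

lemma aux_Rp_cont {X : Type*} [TopologicalSpace X]
    {H W : Type*} [NormedAddCommGroup H] [NormedSpace ℂ H]
    [NormedAddCommGroup W] [NormedSpace ℂ W]
    (ι : W →L[ℂ] H) (S : X → (W →L[ℂ] H)) (Rp : X → (H →L[ℂ] W))
    (hRp1 : ∀ (x : X) (ψ : H), S x (Rp x ψ) + Complex.I • ι (Rp x ψ) = ψ)
    (hRp2 : ∀ (x : X) (ξ : W), Rp x (S x ξ + Complex.I • ι ξ) = ξ)
    (hS_cont : Continuous S)
    (g : X → H) (hg : Continuous g) :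
    Continuous fun x => Rp x (g x) := by
  have key : ∀ x y (ψ : H),
      Rp x ψ = Rp y ψ + Rp x ((S y) (Rp y ψ) - (S x) (Rp y ψ)) := by
    intro x y ψ
    set η := Rp y ψ with hη
    have h1 : S y η + Complex.I • ι η = ψ := hRp1 y ψ
    have h2 : Rp x ((S x η + Complex.I • ι η) + (S y η - S x η))
        = η + Rp x (S y η - S x η) := by
      rw [map_add, hRp2]
    have h3 : (S x η + Complex.I • ι η) + (S y η - S x η) = ψ := by
      rw [← h1]; abel
    rw [h3] at h2
    exact h2
  rw [continuous_iff_continuousAt]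
  intro y
  set M : ℝ := ‖Rp y‖ + 1 with hM
  have hM0 : 0 < M := by positivity
  have hMle : ‖Rp y‖ ≤ M := by simp [hM]
  -- uniform bound near y
  have hbound : ∀ x, ‖S x - S y‖ ≤ 1 / (2 * M) → ∀ ψ : H, ‖Rp x ψ‖ ≤ 2 * M * ‖ψ‖ := by
    intro x hx ψ
    have hk := key y x ψ
    -- Rp y ψ = Rp x ψ + Rp y (S x (Rp x ψ) - S y (Rp x ψ))
    have : Rp x ψ = Rp y ψ - Rp y ((S x) (Rp x ψ) - (S y) (Rp x ψ)) := by
      rw [hk]; abel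
    have hnorm : ‖Rp x ψ‖ ≤ ‖Rp y ψ‖ + ‖Rp y ((S x) (Rp x ψ) - (S y) (Rp x ψ))‖ := by
      conv_lhs => rw [this]
      exact norm_sub_le _ _
    have h4 : ‖(S x) (Rp x ψ) - (S y) (Rp x ψ)‖ ≤ (1 / (2 * M)) * ‖Rp x ψ‖ := by
      have h := (S x - S y).le_opNorm (Rp x ψ)
      rw [ContinuousLinearMap.sub_apply] at h
      exact h.trans (by gcongr)
    have h5 : ‖Rp y ((S x) (Rp x ψ) - (S y) (Rp x ψ))‖ ≤ M * ((1 / (2 * M)) * ‖Rp x ψ‖) := by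
      calc ‖Rp y ((S x) (Rp x ψ) - (S y) (Rp x ψ))‖
          ≤ ‖Rp y‖ * ‖(S x) (Rp x ψ) - (S y) (Rp x ψ)‖ := (Rp y).le_opNorm _
        _ ≤ M * ((1 / (2 * M)) * ‖Rp x ψ‖) := by
            apply mul_le_mul hMle h4 (norm_nonneg _) hM0.le
    have h6 : ‖Rp y ψ‖ ≤ M * ‖ψ‖ := by
      calc ‖Rp y ψ‖ ≤ ‖Rp y‖ * ‖ψ‖ := (Rp y).le_opNorm _
        _ ≤ M * ‖ψ‖ := by gcongr
    have hM' : M * ((1 / (2 * M)) * ‖Rp x ψ‖) = ‖Rp x ψ‖ / 2 := by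
      field_simp
    rw [hM'] at h5
    nlinarith [hnorm, h5, h6]
  rw [ContinuousAt, Metric.tendsto_nhds]
  intro ε hε
  set K : ℝ := ‖Rp y (g y)‖ with hK
  have hK0 : 0 ≤ K := norm_nonneg _
  set δ : ℝ := min (1 / (2 * M)) (ε / (4 * M * (K + 1))) with hδdef
  have hδ0 : 0 < δ := by
    apply lt_min <;> positivity
  set ε' : ℝ := ε / (8 * M) with hε'def
  have hε'0 : 0 < ε' := by positivity
  have hSev : ∀ᶠ x in 𝓝 y, ‖S x - S y‖ < δ := by
    have hc : ContinuousAt (fun x => ‖S x - S y‖) y := by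
      exact ((hS_cont.sub continuous_const).norm).continuousAt
    have := hc.tendsto
    simp only [sub_self, norm_zero] at this
    exact this.eventually_lt_const hδ0
  have hgev : ∀ᶠ x in 𝓝 y, ‖g x - g y‖ < ε' := by
    have hc : ContinuousAt (fun x => ‖g x - g y‖) y := ((hg.sub continuous_const).norm).continuousAt
    have := hc.tendsto
    simp only [sub_self, norm_zero] at this
    exact this.eventually_lt_const hε'0
  filter_upwards [hSev, hgev] with x hSx hgx
  rw [dist_eq_norm]
  have hδ1 : ‖S x - S y‖ ≤ 1 / (2 * M) := hSx.le.trans (min_le_left _ _)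
  have hδ2 : δ ≤ ε / (4 * M * (K + 1)) := min_le_right _ _
  have hb := hbound x hδ1
  -- split
  have hsplit : Rp x (g x) - Rp y (g y)
      = Rp x (g x - g y) + (Rp x (g y) - Rp y (g y)) := by
    rw [map_sub]; abel
  have h1 : ‖Rp x (g x - g y)‖ ≤ 2 * M * ‖g x - g y‖ := hb _
  have h1' : ‖Rp x (g x - g y)‖ < 2 * M * ε' := by
    apply h1.trans_lt
    have : (0:ℝ) < 2 * M := by positivity
    exact (mul_lt_mul_iff_right₀ this).2 hgx
  have h2 : Rp x (g y) - Rp y (g y) = Rp x ((S y) (Rp y (g y)) - (S x) (Rp y (g y))) := by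
    rw [key x y (g y)]; abel
  have h3 : ‖(S y) (Rp y (g y)) - (S x) (Rp y (g y))‖ ≤ δ * K := by
    have heq : (S y) (Rp y (g y)) - (S x) (Rp y (g y)) = -((S x - S y) (Rp y (g y))) := by
      simp [ContinuousLinearMap.sub_apply]
    rw [heq, norm_neg]
    calc ‖(S x - S y) (Rp y (g y))‖ ≤ ‖S x - S y‖ * ‖Rp y (g y)‖ := (S x - S y).le_opNorm _
      _ ≤ δ * K := by apply mul_le_mul hSx.le le_rfl hK0 hδ0.le
  have h4 : ‖Rp x (g y) - Rp y (g y)‖ ≤ 2 * M * (δ * K) := by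
    rw [h2]; exact (hb _).trans (by gcongr)
  have h5 : 2 * M * (δ * K) ≤ ε / 2 := by
    have : 2 * M * (δ * K) ≤ 2 * M * ((ε / (4 * M * (K + 1))) * K) := by
      gcongr
    apply this.trans
    have ha : (ε / (4 * M * (K + 1))) * (4 * M * (K + 1)) = ε :=
      div_mul_cancel₀ _ (by positivity)
    have ha0 : 0 ≤ ε / (4 * M * (K + 1)) := by positivity
    nlinarith [ha, hK0, hM0, ha0, mul_nonneg hM0.le ha0]
  have h6 : 2 * M * ε' = ε / 4 := by
    rw [hε'def]; field_simp; ring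
  calc ‖Rp x (g x) - Rp y (g y)‖
      ≤ ‖Rp x (g x - g y)‖ + ‖Rp x (g y) - Rp y (g y)‖ := by
        rw [hsplit]; exact norm_add_le _ _
    _ < 2 * M * ε' + 2 * M * (δ * K) := by
        apply add_lt_add_of_lt_of_le h1' h4
    _ ≤ ε / 4 + ε / 2 := by rw [h6]; gcongr
    _ < ε := by linarith



/-- Hilbert-space content of Lemma 3.2, `pS_reg-sa`.
Setup as in Statement 2 (abstract domain `W` with graph norm of `S x₀`, inclusion `ι`,
symmetry and resolvent data encoding self-adjointness of each `S x`, assumption (a2)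
= `hS_cont`).  Conclusions:
(i) for every compactly supported continuous `ψ : X → W`, the map `x ↦ S x (ψ x)` is
continuous and compactly supported;
(ii) the functions `x ↦ (S(x)+i)ψ(x)`, for `ψ` ranging over the compactly supported
continuous maps `X → W`, are sup-norm dense in `C₀(X,H)`: every continuous `g : X → H`
vanishing at infinity is uniformly approximated by such functions. -/
theorem pS_reg_sa_core
    {X : Type*} [TopologicalSpace X] [LocallyCompactSpace X] [T2Space X]
    {H : Type*} [NormedAddCommGroup H] [InnerProductSpace ℂ H] [CompleteSpace H]
    {W : Type*} [NormedAddCommGroup W] [NormedSpace ℂ W] [CompleteSpace W]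
    (ι : W →L[ℂ] H) (hι_inj : Function.Injective ι) (hι_dense : DenseRange ι)
    (S : X → (W →L[ℂ] H))
    (x₀ : X) (h_graph : ∀ ξ : W, ‖ξ‖ ^ 2 = ‖ι ξ‖ ^ 2 + ‖S x₀ ξ‖ ^ 2)
    (h_symm : ∀ (x : X) (ξ η : W), (inner ℂ (S x ξ) (ι η) : ℂ) = inner ℂ (ι ξ) (S x η))
    (Rp Rm : X → (H →L[ℂ] W))
    (hRp1 : ∀ (x : X) (ψ : H), S x (Rp x ψ) + Complex.I • ι (Rp x ψ) = ψ)
    (hRp2 : ∀ (x : X) (ξ : W), Rp x (S x ξ + Complex.I • ι ξ) = ξ)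
    (hRm1 : ∀ (x : X) (ψ : H), S x (Rm x ψ) - Complex.I • ι (Rm x ψ) = ψ)
    (hRm2 : ∀ (x : X) (ξ : W), Rm x (S x ξ - Complex.I • ι ξ) = ξ)
    (hS_cont : Continuous S) :
    (∀ ψ : X → W, Continuous ψ → HasCompactSupport ψ →
      Continuous (fun x => S x (ψ x)) ∧ HasCompactSupport (fun x => S x (ψ x))) ∧
    (∀ g : X → H, Continuous g →
      (∀ ε > 0, ∃ C : Set X, IsCompact C ∧ ∀ x ∉ C, ‖g x‖ < ε) →
      ∀ ε > 0, ∃ ψ : X → W, Continuous ψ ∧ HasCompactSupport ψ ∧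
        ∀ x : X, ‖S x (ψ x) + Complex.I • ι (ψ x) - g x‖ ≤ ε) := by
  constructor
  · intro ψ hψc hψs
    refine ⟨hS_cont.clm_apply hψc, ?_⟩
    apply hψs.mono'
    intro x hx
    simp only [Function.mem_support, ne_eq] at hx ⊢
    have : ψ x ≠ 0 := fun h => hx (by rw [h, map_zero])
    exact subset_closure this
  · intro g hg hdecay ε hε
    obtain ⟨C, hC, hCg⟩ := hdecay ε hε
    obtain ⟨φ, hφ1, hφ0, hφsupp, hφ01⟩ :=
      exists_continuous_one_zero_of_isCompact hC isClosed_empty (Set.disjoint_empty C)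
    have hF : Continuous fun x => Rp x (g x) :=
      aux_Rp_cont ι S Rp hRp1 hRp2 hS_cont g hg
    refine ⟨fun x => ((φ x : ℂ)) • Rp x (g x), ?_, ?_, ?_⟩
    · exact (Complex.continuous_ofReal.comp φ.continuous).smul hF
    · apply hφsupp.mono'
      intro x hx
      simp only [Function.mem_support, ne_eq] at hx ⊢
      have : φ x ≠ 0 := by
        intro h
        apply hx
        rw [h]
        simp
      exact subset_closure this
    · intro x
      have hlin : S x ((φ x : ℂ) • Rp x (g x)) + Complex.I • ι ((φ x : ℂ) • Rp x (g x))
          = (φ x : ℂ) • (S x (Rp x (g x)) + Complex.I • ι (Rp x (g x))) := by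
        rw [map_smul, map_smul, smul_add, smul_comm]
      rw [hlin, hRp1 x (g x)]
      have heq : (φ x : ℂ) • g x - g x = (((φ x : ℂ) - 1)) • g x := by
        rw [sub_smul, one_smul]
      rw [heq]
      have hnorm : ‖((φ x : ℂ) - 1) • g x‖ = |φ x - 1| * ‖g x‖ := by
        rw [norm_smul]
        congr 1
        rw [show ((φ x : ℂ) - 1) = ((φ x - 1 : ℝ) : ℂ) by push_cast; ring]
        exact Complex.norm_real _
      rw [hnorm]
      by_cases hx : x ∈ C
      · have : φ x = 1 := hφ1 hx
        simp [this]
        positivity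
      · have h1 : |φ x - 1| ≤ 1 := by
          have := hφ01 x
          rw [Set.mem_Icc] at this
          rw [abs_le]
          constructor <;> linarith [this.1, this.2]
        have h2 : ‖g x‖ ≤ ε := (hCg x hx).le
        calc |φ x - 1| * ‖g x‖ ≤ 1 * ε :=
              mul_le_mul h1 h2 (norm_nonneg _) zero_le_one
          _ = ε := one_mul ε
end

section
/- Assume the family {S(x)}_{x∈X} satisfies assumption (a2), and assume in addition that the graph norms of the S(x) are uniformly equivalent: there are constants C₁, C₂ > 0 such that C₁‖ξ‖_W ≤ (‖ξ‖² + ‖S(x)ξ‖²)^{1/2} ≤ C₂‖ξ‖_W for all x ∈ X and ξ ∈ W. Let ψ : X → H be a continuous function vanishing at infinity with ψ(x) ∈ W for every x ∈ X. Then the map x ↦ S(x)ψ(x) is continuous from X to H and vanishes at infinity if and only if ψ, viewed as a map X → (W, ‖·‖_W), is continuous and vanishes at infinity. [Hilbert-space content of the last claim of Lemma 3.2 (pS_reg-sa): Dom S(·) = C₀(X,W).] -/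
open Filter Topology

/-- Hilbert-space content of the last claim of Lemma 3.2, `pS_reg-sa`.
Setup as in Statement 2 (abstract domain `W` = graph norm of `S x₀`, inclusion `ι`,
symmetry and resolvent data encoding self-adjointness, assumption (a2) = `hS_cont`).
Assume the graph norms of the `S x` are uniformly equivalent (constants `C₁, C₂ > 0`).
Let `ψ : X → W` be such that `x ↦ ι (ψ x)` (i.e. `ψ` viewed in `H`) is continuous and
vanishes at infinity.  Then `x ↦ S x (ψ x)` is continuous and vanishes at infinity iff
`ψ : X → W` is continuous and vanishes at infinity in the `W`-norm. -/
theorem pS_reg_sa_dom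
    {X : Type*} [TopologicalSpace X] [LocallyCompactSpace X] [T2Space X]
    {H : Type*} [NormedAddCommGroup H] [InnerProductSpace ℂ H] [CompleteSpace H]
    {W : Type*} [NormedAddCommGroup W] [NormedSpace ℂ W] [CompleteSpace W]
    (ι : W →L[ℂ] H) (hι_inj : Function.Injective ι) (hι_dense : DenseRange ι)
    (S : X → (W →L[ℂ] H))
    (x₀ : X) (h_graph : ∀ ξ : W, ‖ξ‖ ^ 2 = ‖ι ξ‖ ^ 2 + ‖S x₀ ξ‖ ^ 2)
    (h_symm : ∀ (x : X) (ξ η : W), (inner ℂ (S x ξ) (ι η) : ℂ) = inner ℂ (ι ξ) (S x η))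
    (hS_cont : Continuous S)
    (C₁ C₂ : ℝ) (hC₁ : 0 < C₁) (hC₂ : 0 < C₂)
    (h_unif : ∀ (x : X) (ξ : W),
      C₁ * ‖ξ‖ ≤ Real.sqrt (‖ι ξ‖ ^ 2 + ‖S x ξ‖ ^ 2) ∧
      Real.sqrt (‖ι ξ‖ ^ 2 + ‖S x ξ‖ ^ 2) ≤ C₂ * ‖ξ‖)
    (ψ : X → W)
    (hψ_cont : Continuous (fun x => ι (ψ x)))
    (hψ_zero : ∀ ε > 0, ∃ C : Set X, IsCompact C ∧ ∀ x ∉ C, ‖ι (ψ x)‖ < ε) :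
    (Continuous (fun x => S x (ψ x)) ∧
      (∀ ε > 0, ∃ C : Set X, IsCompact C ∧ ∀ x ∉ C, ‖S x (ψ x)‖ < ε)) ↔
    (Continuous ψ ∧
      (∀ ε > 0, ∃ C : Set X, IsCompact C ∧ ∀ x ∉ C, ‖ψ x‖ < ε)) := by
  
  -- basic inequalities
  have hsqle : ∀ a b : ℝ, 0 ≤ a → 0 ≤ b → Real.sqrt (a ^ 2 + b ^ 2) ≤ a + b := by
    intro a b ha hb
    have h1 : a ^ 2 + b ^ 2 ≤ (a + b) ^ 2 := by nlinarith
    calc Real.sqrt (a ^ 2 + b ^ 2) ≤ Real.sqrt ((a + b) ^ 2) := Real.sqrt_le_sqrt h1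
      _ = a + b := Real.sqrt_sq (by linarith)
  have hb : ∀ (x : X) (ξ : W), ‖S x ξ‖ ≤ C₂ * ‖ξ‖ := by
    intro x ξ
    calc ‖S x ξ‖ = Real.sqrt (‖S x ξ‖ ^ 2) := (Real.sqrt_sq (norm_nonneg _)).symm
      _ ≤ Real.sqrt (‖ι ξ‖ ^ 2 + ‖S x ξ‖ ^ 2) :=
          Real.sqrt_le_sqrt (le_add_of_nonneg_left (by positivity))
      _ ≤ C₂ * ‖ξ‖ := (h_unif x ξ).2
  have hlow : ∀ (x : X) (ξ : W), C₁ * ‖ξ‖ ≤ ‖ι ξ‖ + ‖S x ξ‖ := by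
    intro x ξ
    exact le_trans (h_unif x ξ).1 (hsqle _ _ (norm_nonneg _) (norm_nonneg _))
  constructor
  · rintro ⟨hc, hz⟩
    constructor
    · -- continuity of ψ in W-norm
      rw [continuous_iff_continuousAt]
      intro y
      rw [ContinuousAt, tendsto_iff_norm_sub_tendsto_zero]
      have hg : Tendsto (fun x => ‖ι (ψ x) - ι (ψ y)‖ + ‖S x (ψ x) - S y (ψ y)‖
          + ‖(S y - S x) (ψ y)‖) (𝓝 y) (𝓝 0) := by
        have h1 : Tendsto (fun x => ‖ι (ψ x) - ι (ψ y)‖) (𝓝 y) (𝓝 0) := by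
          have t : Tendsto (fun x => ι (ψ x) - ι (ψ y)) (𝓝 y) (𝓝 (ι (ψ y) - ι (ψ y))) :=
            (hψ_cont.tendsto y).sub tendsto_const_nhds
          simpa using t.norm
        have h2 : Tendsto (fun x => ‖S x (ψ x) - S y (ψ y)‖) (𝓝 y) (𝓝 0) := by
          have t : Tendsto (fun x => S x (ψ x) - S y (ψ y)) (𝓝 y)
              (𝓝 (S y (ψ y) - S y (ψ y))) := (hc.tendsto y).sub tendsto_const_nhds
          simpa using t.norm
        have h3 : Tendsto (fun x => ‖(S y - S x) (ψ y)‖) (𝓝 y) (𝓝 0) := by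
          have hcS : Continuous fun x => ‖(S y - S x) (ψ y)‖ :=
            ((continuous_const.sub hS_cont).clm_apply continuous_const).norm
          have := hcS.tendsto y
          simpa using this
        have := (h1.add h2).add h3
        simpa using this
      have hg' : Tendsto (fun x => C₁⁻¹ * (‖ι (ψ x) - ι (ψ y)‖ + ‖S x (ψ x) - S y (ψ y)‖
          + ‖(S y - S x) (ψ y)‖)) (𝓝 y) (𝓝 0) := by
        simpa using hg.const_mul C₁⁻¹
      apply squeeze_zero (fun x => norm_nonneg _) ?_ hg'
      intro x
      · have key : C₁ * ‖ψ x - ψ y‖ ≤ ‖ι (ψ x) - ι (ψ y)‖ + ‖S x (ψ x) - S y (ψ y)‖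
            + ‖(S y - S x) (ψ y)‖ := by
          have h1 := hlow x (ψ x - ψ y)
          have e1 : ι (ψ x - ψ y) = ι (ψ x) - ι (ψ y) := map_sub ι _ _
          have e2 : S x (ψ x - ψ y) = (S x (ψ x) - S y (ψ y)) + (S y - S x) (ψ y) := by
            simp only [map_sub, ContinuousLinearMap.sub_apply]
            abel
          rw [e1, e2] at h1
          have := norm_add_le (S x (ψ x) - S y (ψ y)) ((S y - S x) (ψ y))
          linarith
        have : ‖ψ x - ψ y‖ ≤ C₁⁻¹ * (‖ι (ψ x) - ι (ψ y)‖ + ‖S x (ψ x) - S y (ψ y)‖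
            + ‖(S y - S x) (ψ y)‖) := by
          rw [le_inv_mul_iff₀ hC₁]
          exact key
        exact this
    · intro ε hε
      obtain ⟨C, hC, h1⟩ := hψ_zero (C₁ * ε / 2) (by positivity)
      obtain ⟨D, hD, h2⟩ := hz (C₁ * ε / 2) (by positivity)
      refine ⟨C ∪ D, hC.union hD, fun x hx => ?_⟩
      have hx1 := h1 x (fun h => hx (Or.inl h))
      have hx2 := h2 x (fun h => hx (Or.inr h))
      have := hlow x (ψ x)
      have : C₁ * ‖ψ x‖ < C₁ * ε := by linarith
      exact lt_of_mul_lt_mul_left this hC₁.le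
  · rintro ⟨hc, hz⟩
    refine ⟨hS_cont.clm_apply hc, fun ε hε => ?_⟩
    obtain ⟨C, hC, h1⟩ := hz (ε / C₂) (by positivity)
    refine ⟨C, hC, fun x hx => ?_⟩
    calc ‖S x (ψ x)‖ ≤ C₂ * ‖ψ x‖ := hb x (ψ x)
      _ < C₂ * (ε / C₂) := by
          exact mul_lt_mul_of_pos_left (h1 x hx) hC₂
      _ = ε := by field_simp
end

section
/- Assume the family {S(x)}_{x∈X} satisfies assumptions (a1), (a2) and (a3) with compact set K ⊆ X, and let φ : X → [0,1] be a continuous compactly supported function with φ(x) = 1 for all x ∈ K. Define Q(x) := φ(x)(S(x)−i)⁻¹ + (1−φ(x))S(x)⁻¹ for x ∈ X∖K, and Q(x) := (S(x)−i)⁻¹ for x ∈ K (consistent since 1−φ vanishes on K). Then: (i) Q : X → B(H) is norm-continuous and uniformly bounded, with Q(x)H ⊆ W for every x; (ii) for every x ∈ X and ψ ∈ H one has S(x)(Q(x)ψ) − ψ = iφ(x)(S(x)−i)⁻¹ψ, and for every ψ ∈ W one has Q(x)(S(x)ψ) − ψ = iφ(x)(S(x)−i)⁻¹ψ; (iii)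 the map x ↦ iφ(x)(S(x)−i)⁻¹ is norm-continuous, compactly supported, and takes values in the compact operators on H. In particular Q is a parametrix for S(·) modulo the compact endomorphisms C₀(X, K(H)) of the Hilbert C₀(X)-module C₀(X,H), so S(·) is Fredholm. [Hilbert-space case of Proposition 3.4 (pS_Fred).] -/
open Filter Topology

lemma cont_inv_aux {X W H : Type*} [TopologicalSpace X]
    [NormedAddCommGroup W] [NormedSpace ℂ W]
    [NormedAddCommGroup H] [NormedSpace ℂ H]
    (A : X → (W →L[ℂ] H)) (B : X → (H →L[ℂ] W)) (U : Set X) (hU : IsOpen U)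
    (hA : Continuous A)
    (h1 : ∀ x ∈ U, ∀ ψ : H, A x (B x ψ) = ψ)
    (h2 : ∀ x ∈ U, ∀ ξ : W, B x (A x ξ) = ξ)
    (x : X) (hx : x ∈ U) : ContinuousAt B x := by
  have key : ∀ y ∈ U, ∀ ψ : H, B y ψ - B x ψ = B y ((A x - A y) (B x ψ)) := by
    intro y hy ψ
    have e1 : A x (B x ψ) = ψ := h1 x hx ψ
    have e2 : B y (A y (B x ψ)) = B x ψ := h2 y hy (B x ψ)
    calc B y ψ - B x ψ = B y (A x (B x ψ)) - B y (A y (B x ψ)) := by rw [e1, e2]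
      _ = B y (A x (B x ψ) - A y (B x ψ)) := by rw [map_sub]
      _ = B y ((A x - A y) (B x ψ)) := by simp
  set M := ‖B x‖ with hMdef
  have keyn : ∀ y ∈ U, ‖B y - B x‖ ≤ ‖B y‖ * ‖A x - A y‖ * M := by
    intro y hy
    refine ContinuousLinearMap.opNorm_le_bound _ (by positivity) fun ψ => ?_
    have : (B y - B x) ψ = B y ((A x - A y) (B x ψ)) := by
      simpa using key y hy ψ
    rw [this]
    calc ‖B y ((A x - A y) (B x ψ))‖ ≤ ‖B y‖ * ‖(A x - A y) (B x ψ)‖ :=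
          (B y).le_opNorm _
      _ ≤ ‖B y‖ * (‖A x - A y‖ * ‖B x ψ‖) := by
          gcongr; exact (A x - A y).le_opNorm _
      _ ≤ ‖B y‖ * (‖A x - A y‖ * (M * ‖ψ‖)) := by
          gcongr; exact (B x).le_opNorm _
      _ = ‖B y‖ * ‖A x - A y‖ * M * ‖ψ‖ := by ring
  have hM : 0 ≤ M := norm_nonneg _
  have hsmall : ∀ᶠ y in 𝓝 x, ‖A y - A x‖ < 1 / (2 * (M + 1)) := by
    exact (tendsto_iff_norm_sub_tendsto_zero.mp (hA.tendsto x)).eventually_lt_const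
      (by positivity)
  have hUev : ∀ᶠ y in 𝓝 x, y ∈ U := hU.mem_nhds hx
  have hbound : ∀ᶠ y in 𝓝 x, ‖B y - B x‖ ≤ 2 * M * M * ‖A y - A x‖ := by
    filter_upwards [hsmall, hUev] with y hs hy
    have hB : ‖B y‖ ≤ 2 * M := by
      have h1' : ‖B y‖ ≤ M + ‖B y - B x‖ := by
        have := norm_sub_norm_le (B y) (B x)
        linarith
      have h2' : ‖B y - B x‖ ≤ ‖B y‖ * ‖A x - A y‖ * M := keyn y hy
      have h3 : ‖A x - A y‖ ≤ 1 / (2 * (M + 1)) := by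
        rw [norm_sub_rev]; exact le_of_lt hs
      have h4 : ‖B y‖ * ‖A x - A y‖ * M ≤ ‖B y‖ * (1 / (2 * (M + 1))) * M := by
        gcongr
      have h5 : ‖B y‖ * (1 / (2 * (M + 1))) * M ≤ ‖B y‖ / 2 := by
        rw [mul_one_div, div_mul_eq_mul_div, div_le_div_iff₀ (by positivity) two_pos]
        nlinarith [norm_nonneg (B y)]
      linarith
    calc ‖B y - B x‖ ≤ ‖B y‖ * ‖A x - A y‖ * M := keyn y hy
      _ ≤ 2 * M * ‖A x - A y‖ * M := by gcongr
      _ = 2 * M * M * ‖A y - A x‖ := by rw [norm_sub_rev]; ring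
  have htend : Tendsto (fun y => 2 * M * M * ‖A y - A x‖) (𝓝 x) (𝓝 0) := by
    simpa using (tendsto_iff_norm_sub_tendsto_zero.mp (hA.tendsto x)).const_mul (2 * M * M)
  have : Tendsto (fun y => ‖B y - B x‖) (𝓝 x) (𝓝 0) :=
    squeeze_zero' (Eventually.of_forall fun _ => norm_nonneg _) hbound htend
  rw [ContinuousAt, tendsto_iff_norm_sub_tendsto_zero]
  exact this

/-- Hilbert-space case of Proposition 3.4, `pS_Fred`.
Setup as in Statement 2, with assumption (a1) (`hι_cpt`: the inclusion `ι : W → H` is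
compact), (a2) (`hS_cont`), and (a3): a compact set `K` and `c > 0` such that for `x ∉ K`
the operator `S x : W → H` is invertible with inverse `Sinv x` (valued in `W`) of norm
at most `c`.  `Rm x` is the resolvent `(S(x) − i)⁻¹` (valued in `W`).
Let `φ : X → [0,1]` be continuous and compactly supported with `φ = 1` on `K`, and let
`Q x := φ(x)•(S(x)−i)⁻¹ + (1−φ(x))•S(x)⁻¹` (valued in `W`, so `Q(x)H ⊆ W` automatically).
Then: (i) `x ↦ ι ∘ Q x` is norm-continuous and uniformly bounded;
(ii) `S x (Q x ψ) − ψ = iφ(x)(S(x)−i)⁻¹ψ` for all `ψ ∈ H`, and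
`Q x (S x ξ) − ξ = iφ(x)(S(x)−i)⁻¹(ι ξ)` for all `ξ ∈ W`;
(iii) `x ↦ iφ(x)(S(x)−i)⁻¹` is norm-continuous, compactly supported, and takes values in
the compact operators on `H`.  (Hence `Q` is a parametrix for `S(·)` modulo
`C₀(X, K(H))`, so `S(·)` is Fredholm.) -/
theorem pS_Fred
    {X : Type*} [TopologicalSpace X] [LocallyCompactSpace X] [T2Space X]
    {H : Type*} [NormedAddCommGroup H] [InnerProductSpace ℂ H] [CompleteSpace H]
    {W : Type*} [NormedAddCommGroup W] [NormedSpace ℂ W] [CompleteSpace W]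
    (ι : W →L[ℂ] H) (hι_inj : Function.Injective ι) (hι_dense : DenseRange ι)
    (hι_cpt : IsCompactOperator ⇑ι)
    (S : X → (W →L[ℂ] H))
    (x₀ : X) (h_graph : ∀ ξ : W, ‖ξ‖ ^ 2 = ‖ι ξ‖ ^ 2 + ‖S x₀ ξ‖ ^ 2)
    (h_symm : ∀ (x : X) (ξ η : W), (inner ℂ (S x ξ) (ι η) : ℂ) = inner ℂ (ι ξ) (S x η))
    (Rp Rm : X → (H →L[ℂ] W))
    (hRp1 : ∀ (x : X) (ψ : H), S x (Rp x ψ) + Complex.I • ι (Rp x ψ) = ψ)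
    (hRp2 : ∀ (x : X) (ξ : W), Rp x (S x ξ + Complex.I • ι ξ) = ξ)
    (hRm1 : ∀ (x : X) (ψ : H), S x (Rm x ψ) - Complex.I • ι (Rm x ψ) = ψ)
    (hRm2 : ∀ (x : X) (ξ : W), Rm x (S x ξ - Complex.I • ι ξ) = ξ)
    (hS_cont : Continuous S)
    (K : Set X) (hK : IsCompact K)
    (c : ℝ) (hc : 0 < c)
    (Sinv : X → (H →L[ℂ] W))
    (hSinv1 : ∀ x ∉ K, ∀ ψ : H, S x (Sinv x ψ) = ψ)
    (hSinv2 : ∀ x ∉ K, ∀ ξ : W, Sinv x (S x ξ) = ξ)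
    (hSinv_bdd : ∀ x ∉ K, ∀ ψ : H, ‖ι (Sinv x ψ)‖ ≤ c * ‖ψ‖)
    (φ : X → ℝ) (hφ_cont : Continuous φ) (hφ_supp : HasCompactSupport φ)
    (hφ01 : ∀ x, φ x ∈ Set.Icc (0 : ℝ) 1) (hφK : ∀ x ∈ K, φ x = 1)
    (Q : X → (H →L[ℂ] W))
    (hQ : ∀ x, Q x = (φ x : ℂ) • Rm x + ((1 : ℂ) - (φ x : ℂ)) • Sinv x) :
    (Continuous (fun x => (ι.comp (Q x) : H →L[ℂ] H)) ∧
      ∃ b : ℝ, ∀ x : X, ‖(ι.comp (Q x) : H →L[ℂ] H)‖ ≤ b) ∧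
    ((∀ (x : X) (ψ : H),
        S x (Q x ψ) - ψ = (Complex.I * (φ x : ℂ)) • ι (Rm x ψ)) ∧
      (∀ (x : X) (ξ : W),
        ι (Q x (S x ξ)) - ι ξ = (Complex.I * (φ x : ℂ)) • ι (Rm x (ι ξ)))) ∧
    (Continuous (fun x => (Complex.I * (φ x : ℂ)) • (ι.comp (Rm x) : H →L[ℂ] H)) ∧
      HasCompactSupport (fun x => (Complex.I * (φ x : ℂ)) • (ι.comp (Rm x) : H →L[ℂ] H)) ∧
      ∀ x : X, IsCompactOperator
        ⇑((Complex.I * (φ x : ℂ)) • (ι.comp (Rm x) : H →L[ℂ] H))) := by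
  -- resolvent bound ‖ι (Rm x ψ)‖ ≤ ‖ψ‖
  have hRm_bdd : ∀ (x : X) (ψ : H), ‖ι (Rm x ψ)‖ ≤ ‖ψ‖ := by
    intro x ψ
    set ξ := Rm x ψ with hξ
    have him : (inner ℂ (S x ξ) (ι ξ) : ℂ).im = 0 := by
      have h := h_symm x ξ ξ
      have h2 : (inner ℂ (ι ξ) (S x ξ) : ℂ) = starRingEnd ℂ (inner ℂ (S x ξ) (ι ξ)) :=
        (inner_conj_symm _ _).symm
      rw [h2] at h
      exact Complex.conj_eq_iff_im.mp h.symm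
    have hn : ‖ψ‖ ^ 2 = ‖S x ξ‖ ^ 2 + ‖ι ξ‖ ^ 2 := by
      have hdef := hRm1 x ψ
      rw [← hdef, @norm_sub_sq ℂ, inner_smul_right]
      simp [Complex.mul_re, ← hξ, him, norm_smul]
    nlinarith [norm_nonneg (ι ξ), norm_nonneg ψ, norm_nonneg (S x ξ)]
  -- continuity of Rm
  have hRm_cont : Continuous Rm := by
    rw [continuous_iff_continuousAt]
    intro x
    refine cont_inv_aux (fun x => S x - Complex.I • ι) Rm Set.univ isOpen_univ
      (hS_cont.sub continuous_const) (fun x _ ψ => ?_) (fun x _ ξ => ?_) x trivial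
    · simpa using hRm1 x ψ
    · simpa using hRm2 x ξ
  have hT_cont : Continuous (fun x => (ι.comp (Rm x) : H →L[ℂ] H)) :=
    continuous_const.clm_comp hRm_cont
  have hT_bdd : ∀ x, ‖(ι.comp (Rm x) : H →L[ℂ] H)‖ ≤ 1 := fun x =>
    ContinuousLinearMap.opNorm_le_bound _ zero_le_one fun ψ => by
      simpa using hRm_bdd x ψ
  -- bounds on φ
  have hφ0 : ∀ x, 0 ≤ φ x := fun x => (hφ01 x).1
  have hφ1 : ∀ x, φ x ≤ 1 := fun x => (hφ01 x).2
  -- the Sinv part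
  set F : X → (H →L[ℂ] H) := fun x =>
    ((1 : ℂ) - (φ x : ℂ)) • (ι.comp (Sinv x)) with hF
  have hF_norm : ∀ x, ‖F x‖ ≤ c * |1 - φ x| := by
    intro x
    by_cases hx : x ∈ K
    · have : F x = 0 := by simp [hF, hφK x hx]
      rw [this, norm_zero]
      positivity
    · have h1 : ‖(ι.comp (Sinv x) : H →L[ℂ] H)‖ ≤ c :=
        ContinuousLinearMap.opNorm_le_bound _ hc.le fun ψ => by
          simpa using hSinv_bdd x hx ψ
      calc ‖F x‖ = ‖(1 : ℂ) - (φ x : ℂ)‖ * ‖(ι.comp (Sinv x) : H →L[ℂ] H)‖ := by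
            rw [hF]; exact norm_smul _ _
        _ ≤ |1 - φ x| * c := by
            have : ((1 : ℂ) - (φ x : ℂ)) = ((1 - φ x : ℝ) : ℂ) := by push_cast; ring
            rw [this, Complex.norm_real]
            rw [Real.norm_eq_abs]
            gcongr
        _ = c * |1 - φ x| := mul_comm _ _
  have hF_cont : Continuous F := by
    rw [continuous_iff_continuousAt]
    intro x
    by_cases hx : x ∈ K
    · -- F x = 0 and squeeze
      have hFx : F x = 0 := by simp [hF, hφK x hx]
      rw [ContinuousAt, hFx]
      have htend : Tendsto (fun y => c * |1 - φ y|) (𝓝 x) (𝓝 0) := by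
        have : Tendsto (fun y => c * |1 - φ y|) (𝓝 x) (𝓝 (c * |1 - φ x|)) :=
          (tendsto_const_nhds.mul ((continuous_const.sub hφ_cont).abs.tendsto x))
        simpa [hφK x hx] using this
      exact squeeze_zero_norm (fun y => hF_norm y) htend
    · have hSinv_at : ContinuousAt Sinv x :=
        cont_inv_aux S Sinv Kᶜ hK.isClosed.isOpen_compl hS_cont
          (fun y hy => hSinv1 y hy) (fun y hy => hSinv2 y hy) x hx
      have h1 : ContinuousAt (fun y => (ι.comp (Sinv y) : H →L[ℂ] H)) x :=
        ((ContinuousLinearMap.compL ℂ H W H ι).continuous.continuousAt).comp hSinv_at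
      exact ((continuous_const.sub
        (Complex.continuous_ofReal.comp hφ_cont)).continuousAt).smul h1
  -- decomposition of ι ∘ Q
  have hQdecomp : (fun x => (ι.comp (Q x) : H →L[ℂ] H)) =
      fun x => (φ x : ℂ) • (ι.comp (Rm x) : H →L[ℂ] H) + F x := by
    funext x
    ext ψ
    simp [hQ x, hF]
  constructor
  · constructor
    · rw [hQdecomp]
      exact ((Complex.continuous_ofReal.comp hφ_cont).smul hT_cont).add hF_cont
    · refine ⟨1 + c, fun x => ?_⟩
      rw [congrFun hQdecomp x]
      calc ‖(φ x : ℂ) • (ι.comp (Rm x) : H →L[ℂ] H) + F x‖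
          ≤ ‖(φ x : ℂ) • (ι.comp (Rm x) : H →L[ℂ] H)‖ + ‖F x‖ := norm_add_le _ _
        _ ≤ 1 + c := by
            have e1 : ‖(φ x : ℂ) • (ι.comp (Rm x) : H →L[ℂ] H)‖ ≤ 1 := by
              rw [norm_smul, Complex.norm_real, Real.norm_eq_abs]
              have := hT_bdd x
              have h0 := hφ0 x; have h1 := hφ1 x
              rw [abs_of_nonneg h0]
              nlinarith [norm_nonneg (ι.comp (Rm x) : H →L[ℂ] H)]
            have e2 : ‖F x‖ ≤ c := by
              refine (hF_norm x).trans ?_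
              have h0 := hφ0 x; have h1 := hφ1 x
              rw [abs_of_nonneg (by linarith)]
              nlinarith
            linarith
  constructor
  · constructor
    · intro x ψ
      have hSR : S x (Rm x ψ) = ψ + Complex.I • ι (Rm x ψ) :=
        sub_eq_iff_eq_add.mp (hRm1 x ψ)
      have hSinvpart : ((1 : ℂ) - (φ x : ℂ)) • S x (Sinv x ψ)
          = ((1 : ℂ) - (φ x : ℂ)) • ψ := by
        by_cases hx : x ∈ K
        · simp [hφK x hx]
        · rw [hSinv1 x hx ψ]
      rw [hQ]
      simp only [ContinuousLinearMap.add_apply, ContinuousLinearMap.coe_smul',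
        Pi.smul_apply, map_add, map_smul]
      rw [hSR, hSinvpart, smul_add]
      module
    · intro x ξ
      have hRmS : Rm x (S x ξ) = ξ + Complex.I • Rm x (ι ξ) := by
        have h := hRm2 x ξ
        rw [map_sub, map_smul] at h
        exact sub_eq_iff_eq_add.mp h
      have hSinvpart : ((1 : ℂ) - (φ x : ℂ)) • Sinv x (S x ξ)
          = ((1 : ℂ) - (φ x : ℂ)) • ξ := by
        by_cases hx : x ∈ K
        · simp [hφK x hx]
        · rw [hSinv2 x hx ξ]
      rw [hQ]
      simp only [ContinuousLinearMap.add_apply, ContinuousLinearMap.coe_smul',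
        Pi.smul_apply]
      rw [hRmS, hSinvpart]
      simp only [map_add, map_smul, smul_add]
      module
  · refine ⟨?_, ?_, ?_⟩
    · exact ((continuous_const.mul
        (Complex.continuous_ofReal.comp hφ_cont)).smul hT_cont)
    · have h1 : HasCompactSupport (fun x => Complex.I * (φ x : ℂ)) :=
        hφ_supp.comp_left (g := fun t : ℝ => Complex.I * (t : ℂ)) (by simp)
      exact h1.smul_right
    · intro x
      have h1 : IsCompactOperator (⇑ι ∘ ⇑(Rm x)) := hι_cpt.comp_clm (Rm x)
      have h2 := h1.smul (Complex.I * (φ x : ℂ))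
      have he : ⇑((Complex.I * (φ x : ℂ)) • (ι.comp (Rm x) : H →L[ℂ] H))
          = (Complex.I * (φ x : ℂ)) • (⇑ι ∘ ⇑(Rm x)) := by
        funext ψ; simp
      rw [he]; exact h2
end

section
/- Let H be a separable complex Hilbert space and assume the family {S(x)}_{x∈X} satisfies assumptions (a1) and (a2). Then for every point x₁ ∈ X there exist a compact self-adjoint operator A on H, an open neighbourhood O of x₁ with compact closure, and a constant c > 0, such that for every y ∈ O the operator S(y) + A : W → H is bijective and ‖(S(y)+A)⁻¹‖ ≤ c. (In the paper's terminology: there exist locally trivialising families for S(·); the perturbation can be taken to be twice the spectral projection of S(x₁) onto [−1,1].) [Lemma 3.5 (pS_loc_triv_fam).] -/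
open Filter Topology

open scoped InnerProductSpace

private lemma aux_bijective
    {H : Type*} [NormedAddCommGroup H] [InnerProductSpace ℂ H] [CompleteSpace H]
    {W : Type*} [NormedAddCommGroup W] [NormedSpace ℂ W] [CompleteSpace W]
    (ι : W →L[ℂ] H) (Sy : W →L[ℂ] H) (A : H →L[ℂ] H)
    (hA : ∀ x y : H, ⟪A x, y⟫_ℂ = ⟪x, A y⟫_ℂ)
    (hsymm : ∀ ξ η : W, ⟪Sy ξ, ι η⟫_ℂ = ⟪ι ξ, Sy η⟫_ℂ)
    (Rpy Rmy : H →L[ℂ] W)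
    (hRp1y : ∀ ψ : H, Sy (Rpy ψ) + Complex.I • ι (Rpy ψ) = ψ)
    (hRm1y : ∀ ψ : H, Sy (Rmy ψ) - Complex.I • ι (Rmy ψ) = ψ)
    (c2 : ℝ) (hc : ∀ ξ : W, ‖ξ‖ ≤ c2 * ‖Sy ξ + A (ι ξ)‖) :
    Function.Bijective (fun ξ : W => Sy ξ + A (ι ξ)) := by
  set T : W →L[ℂ] H := Sy + A.comp ι with hT
  have hTapp : ∀ ξ : W, T ξ = Sy ξ + A (ι ξ) := fun ξ => rfl
  have hfun : (fun ξ : W => Sy ξ + A (ι ξ)) = ⇑T := by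
    funext ξ; rw [hTapp]
  rw [hfun]
  have hinj0 : ∀ ξ : W, T ξ = 0 → ξ = 0 := by
    intro ξ h
    have h1 := hc ξ
    rw [← hTapp, h] at h1
    simp only [norm_zero, mul_zero] at h1
    exact norm_le_zero_iff.mp h1
  have hinj : Function.Injective ⇑T := by
    rw [injective_iff_map_eq_zero]
    exact hinj0
  refine ⟨hinj, ?_⟩
  -- closed range
  have hbound : ∀ ξ : W, ‖ξ‖ ≤ (c2.toNNReal : ℝ) * ‖T ξ‖ := by
    intro ξ
    refine (hc ξ).trans ?_
    rw [hTapp]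
    exact mul_le_mul_of_nonneg_right (Real.le_coe_toNNReal c2) (norm_nonneg _)
  have hclosed : IsClosed (Set.range ⇑T) :=
    (T.antilipschitz_of_bound hbound).isClosed_range T.uniformContinuous
  -- dense range
  have hdense : (LinearMap.range (T : W →ₗ[ℂ] H))ᗮ = ⊥ := by
    rw [Submodule.eq_bot_iff]
    intro ψ hψ
    rw [Submodule.mem_orthogonal] at hψ
    set φ0 : H := -(A ψ) with hφ0
    set η : W := Rmy (φ0 - Complex.I • ψ) with hη
    have hSη : Sy η = φ0 - Complex.I • ψ + Complex.I • ι η :=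
      sub_eq_iff_eq_add.mp (hRm1y (φ0 - Complex.I • ψ))
    have hstep : ∀ ξ : W, ⟪Sy ξ, ψ⟫_ℂ = ⟪ι ξ, φ0⟫_ℂ := by
      intro ξ
      have h0 : ⟪T ξ, ψ⟫_ℂ = 0 := hψ _ (LinearMap.mem_range_self (T : W →ₗ[ℂ] H) ξ)
      rw [hTapp, inner_add_left, hA] at h0
      have h2 : ⟪ι ξ, φ0⟫_ℂ = -⟪ι ξ, A ψ⟫_ℂ := by
        rw [hφ0, inner_neg_right]
      rw [h2]
      linear_combination h0
    have hker : ψ - ι η = 0 := by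
      have horth : ∀ χ : H, ⟪χ, ψ - ι η⟫_ℂ = 0 := by
        intro χ
        have hχ := hRp1y χ
        calc ⟪χ, ψ - ι η⟫_ℂ
            = ⟪Sy (Rpy χ) + Complex.I • ι (Rpy χ), ψ - ι η⟫_ℂ := by rw [hχ]
          _ = 0 := by
              set ξ := Rpy χ
              rw [inner_add_left, inner_smul_left, inner_sub_right, inner_sub_right,
                hstep ξ, hsymm ξ η, hSη]
              simp only [inner_add_right, inner_sub_right, inner_smul_right,
                Complex.conj_I]
              ring
      have h3 := horth (ψ - ι η)
      rwa [inner_self_eq_zero] at h3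
    have hψη : ψ = ι η := by rwa [sub_eq_zero] at hker
    have hTη : T η = 0 := by
      rw [hTapp, hSη, ← hψη]
      simp [hφ0]
    rw [hψη, hinj0 η hTη, map_zero]
  have hclosure : (LinearMap.range (T : W →ₗ[ℂ] H)).topologicalClosure = ⊤ :=
    Submodule.topologicalClosure_eq_top_iff.mpr hdense
  rw [← Set.range_eq_univ]
  have h1 : Set.range ⇑T = ((LinearMap.range (T : W →ₗ[ℂ] H) : Submodule ℂ H) : Set H) :=
    (LinearMap.coe_range (T : W →ₗ[ℂ] H)).symm
  rw [h1] at hclosed ⊢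
  rw [← hclosed.closure_eq, ← Submodule.topologicalClosure_coe, hclosure,
    Submodule.top_coe]


set_option maxHeartbeats 1000000 in
/-- Lemma 3.5, `pS_loc_triv_fam`.
`H` is a separable Hilbert space and the family `{S(x)}_{x∈X}` satisfies assumptions
(a1) (`hι_cpt`) and (a2) (`hS_cont`), in the encoding of Statement 2 (abstract domain `W`
with graph norm of `S x₀`, inclusion `ι`, symmetry and resolvent data encoding
self-adjointness).  Then for every `x₁ ∈ X` there exist a compact self-adjoint operator
`A` on `H`, an open neighbourhood `O` of `x₁` with compact closure, and `c > 0` such that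
for every `y ∈ O` the operator `S y + A : W → H` is bijective with `‖(S y + A)⁻¹‖ ≤ c`. -/
theorem pS_loc_triv_fam
    {X : Type*} [TopologicalSpace X] [LocallyCompactSpace X] [T2Space X]
    {H : Type*} [NormedAddCommGroup H] [InnerProductSpace ℂ H] [CompleteSpace H]
    [TopologicalSpace.SeparableSpace H]
    {W : Type*} [NormedAddCommGroup W] [NormedSpace ℂ W] [CompleteSpace W]
    (ι : W →L[ℂ] H) (hι_inj : Function.Injective ι) (hι_dense : DenseRange ι)
    (hι_cpt : IsCompactOperator ⇑ι)
    (S : X → (W →L[ℂ] H))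
    (x₀ : X) (h_graph : ∀ ξ : W, ‖ξ‖ ^ 2 = ‖ι ξ‖ ^ 2 + ‖S x₀ ξ‖ ^ 2)
    (h_symm : ∀ (x : X) (ξ η : W), (inner ℂ (S x ξ) (ι η) : ℂ) = inner ℂ (ι ξ) (S x η))
    (Rp Rm : X → (H →L[ℂ] W))
    (hRp1 : ∀ (x : X) (ψ : H), S x (Rp x ψ) + Complex.I • ι (Rp x ψ) = ψ)
    (hRp2 : ∀ (x : X) (ξ : W), Rp x (S x ξ + Complex.I • ι ξ) = ξ)
    (hRm1 : ∀ (x : X) (ψ : H), S x (Rm x ψ) - Complex.I • ι (Rm x ψ) = ψ)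
    (hRm2 : ∀ (x : X) (ξ : W), Rm x (S x ξ - Complex.I • ι ξ) = ξ)
    (hS_cont : Continuous S) :
    ∀ x₁ : X, ∃ A : H →L[ℂ] H, IsCompactOperator ⇑A ∧ IsSelfAdjoint A ∧
      ∃ O : Set X, IsOpen O ∧ x₁ ∈ O ∧ IsCompact (closure O) ∧
        ∃ c : ℝ, 0 < c ∧ ∀ y ∈ O,
          Function.Bijective (fun ξ : W => S y ξ + A (ι ξ)) ∧
          ∀ ξ : W, ‖ι ξ‖ ≤ c * ‖S y ξ + A (ι ξ)‖ := by
  intro x₁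
  -- compactness data for ι
  obtain ⟨K, hK, hKmem⟩ := hι_cpt
  obtain ⟨r, hr, hball⟩ := Metric.mem_nhds_iff.mp hKmem
  -- subsequence extraction principle
  have key : ∀ u : ℕ → W, (∀ n, ‖u n‖ ≤ 1) →
      ∃ (ψ : H) (φ : ℕ → ℕ), StrictMono φ ∧
        Filter.Tendsto (fun n => ι (u (φ n))) Filter.atTop (𝓝 ψ) := by
    intro u hu
    set c0 : ℂ := ((r / 2 : ℝ) : ℂ) with hc0
    have hc0ne : c0 ≠ 0 := by
      simp only [hc0, ne_eq, Complex.ofReal_eq_zero]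
      positivity
    have hmem : ∀ n, (fun n => ι (c0 • u n)) n ∈ K := by
      intro n
      apply hball
      rw [Metric.mem_ball, dist_zero_right, norm_smul, hc0, Complex.norm_real,
        Real.norm_eq_abs, abs_of_pos (by positivity)]
      nlinarith [hu n, norm_nonneg (u n)]
    obtain ⟨a, -, φ, hφ, htend⟩ := hK.tendsto_subseq hmem
    refine ⟨c0⁻¹ • a, φ, hφ, ?_⟩
    have h2 := htend.const_smul c0⁻¹
    refine h2.congr fun n => ?_
    simp only [Function.comp_apply, ← map_smul, smul_smul, inv_mul_cancel₀ hc0ne, one_smul]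
  -- the kernel of S x₁ is finite-dimensional
  set N : Submodule ℂ W := LinearMap.ker (S x₁ : W →ₗ[ℂ] H) with hN
  have hNclosed : IsClosed (N : Set W) := ContinuousLinearMap.isClosed_ker (S x₁)
  have hNfin : FiniteDimensional ℂ N := by
    apply FiniteDimensional.of_isCompact_closedBall₀ ℂ (r := 1) one_pos
    apply IsSeqCompact.isCompact
    intro x hx
    have hx1 : ∀ n, ‖((x n : W))‖ ≤ 1 := by
      intro n
      have h := hx n
      rw [Metric.mem_closedBall, dist_zero_right] at h
      exact (Submodule.coe_norm (x n)) ▸ h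
    obtain ⟨ψ, φ, hφ, htend⟩ := key (fun n => (x n : W)) hx1
    have hker : ∀ n, S x₁ ((x n : W)) = 0 := fun n => LinearMap.mem_ker.mp (x n).2
    have hrep : ∀ n, ((x n : W)) = Rp x₁ (Complex.I • ι ((x n : W))) := by
      intro n
      have h := hRp2 x₁ ((x n : W))
      rw [hker n, zero_add] at h
      exact h.symm
    set ξ' : W := Rp x₁ (Complex.I • ψ) with hξ'
    have htend2 : Filter.Tendsto (fun n => ((x (φ n) : W))) Filter.atTop (𝓝 ξ') := by
      have h1 := htend.const_smul Complex.I
      have h2 := ((Rp x₁).continuous.tendsto (Complex.I • ψ)).comp h1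
      refine h2.congr fun n => ?_
      exact (hrep (φ n)).symm
    have hmemN : ξ' ∈ N :=
      hNclosed.mem_of_tendsto htend2 (Filter.Eventually.of_forall fun n => (x (φ n)).2)
    refine ⟨⟨ξ', hmemN⟩, ?_, φ, hφ, ?_⟩
    · rw [Metric.mem_closedBall, dist_zero_right]
      have hnn : Filter.Tendsto (fun n => ‖((x (φ n) : W))‖) Filter.atTop (𝓝 ‖ξ'‖) :=
        (continuous_norm.tendsto ξ').comp htend2
      have : ‖ξ'‖ ≤ 1 := le_of_tendsto hnn (Filter.Eventually.of_forall fun n => hx1 (φ n))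
      exact (Submodule.coe_norm (⟨ξ', hmemN⟩ : N)) ▸ this
    · rw [tendsto_subtype_rng]
      exact htend2
  -- the perturbation A
  set V : Submodule ℂ H := N.map (ι : W →ₗ[ℂ] H) with hV
  haveI : FiniteDimensional ℂ V := Module.Finite.map N (ι : W →ₗ[ℂ] H)
  haveI : CompleteSpace V := FiniteDimensional.complete ℂ V
  haveI : ProperSpace V := FiniteDimensional.proper ℂ V
  set A : H →L[ℂ] H := V.subtypeL.comp (V.orthogonalProjectionOnto) with hA
  have hAsa : IsSelfAdjoint A := isSelfAdjoint_starProjection V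
  have hAsymm : ∀ x y : H, (inner ℂ (A x) y : ℂ) = inner ℂ x (A y) :=
    fun x y => (ContinuousLinearMap.isSelfAdjoint_iff_isSymmetric.mp hAsa) x y
  have hAv : ∀ v : H, v ∈ V → A v = v := by
    intro v hv
    simp only [hA, ContinuousLinearMap.comp_apply, Submodule.coe_subtypeL',
      Submodule.coe_subtype]
    exact Submodule.starProjection_eq_self_iff.mpr hv
  have hAorth : ∀ x : H, x ∈ Vᗮ → A x = 0 := by
    intro x hx
    simp only [hA, ContinuousLinearMap.comp_apply,
      Submodule.orthogonalProjectionOnto_apply_of_mem_orthogonal hx]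
    simp
  have hAcpt : IsCompactOperator ⇑A := by
    refine ⟨V.subtypeL '' Metric.closedBall 0 (‖A‖ + 1),
      (isCompact_closedBall _ _).image V.subtypeL.continuous, ?_⟩
    refine Filter.mem_of_superset (Metric.ball_mem_nhds 0 one_pos) ?_
    intro x hx
    rw [Set.mem_preimage]
    refine ⟨V.orthogonalProjectionOnto x, ?_, rfl⟩
    rw [Metric.mem_closedBall, dist_zero_right]
    have h1 : ‖V.orthogonalProjectionOnto x‖ = ‖A x‖ := by
      rw [hA]
      simp [ContinuousLinearMap.comp_apply]
    rw [h1]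
    have h2 := A.le_opNorm x
    rw [Metric.mem_ball, dist_zero_right] at hx
    nlinarith [A.opNorm_nonneg]
  -- injectivity of S x₁ + A ι
  set T0 : W →L[ℂ] H := S x₁ + A.comp ι with hT0
  have hT0app : ∀ ξ : W, T0 ξ = S x₁ ξ + A (ι ξ) := fun _ => rfl
  have hinj : ∀ ξ : W, T0 ξ = 0 → ξ = 0 := by
    intro ξ h
    rw [hT0app] at h
    have horth : ι ξ ∈ Vᗮ := by
      rw [Submodule.mem_orthogonal]
      intro u hu
      obtain ⟨η, hη, rfl⟩ := Submodule.mem_map.mp hu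
      have hη0 : S x₁ η = 0 := LinearMap.mem_ker.mp hη
      have e1 : (inner ℂ (ι η) (S x₁ ξ) : ℂ) = 0 := by
        rw [← h_symm x₁ η ξ, hη0]
        simp
      have e2 : (inner ℂ (ι η) (A (ι ξ)) : ℂ) = inner ℂ (ι η) (ι ξ) := by
        rw [← hAsymm, hAv (ι η) (Submodule.mem_map_of_mem hη)]
      have e3 : (inner ℂ (ι η) (S x₁ ξ + A (ι ξ)) : ℂ) = 0 := by rw [h]; simp
      rw [inner_add_right, e1, e2, zero_add] at e3
      exact e3
    have hA0 : A (ι ξ) = 0 := hAorth _ horth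
    rw [hA0, add_zero] at h
    have hmem : ι ξ ∈ V := Submodule.mem_map_of_mem (LinearMap.mem_ker.mpr h)
    have h0 : ι ξ = 0 := by
      have := (Submodule.mem_orthogonal V (ι ξ)).mp horth (ι ξ) hmem
      rwa [inner_self_eq_zero] at this
    exact hι_inj (by simpa using h0)
  -- T0 is bounded below
  have hbdd : ∃ c : ℝ, 0 < c ∧ ∀ ξ : W, ‖ξ‖ ≤ c * ‖T0 ξ‖ := by
    by_contra hcon
    push_neg at hcon
    have hseq : ∀ n : ℕ, ∃ ξ : W, ((n : ℝ) + 1) * ‖T0 ξ‖ < ‖ξ‖ := by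
      intro n
      obtain ⟨ξ, hξ⟩ := hcon ((n : ℝ) + 1) (by positivity)
      exact ⟨ξ, hξ⟩
    choose ξs hξs using hseq
    have hpos : ∀ n, 0 < ‖ξs n‖ := by
      intro n
      have := hξs n
      nlinarith [norm_nonneg (T0 (ξs n))]
    set u : ℕ → W := fun n => ((‖ξs n‖ : ℝ) : ℂ)⁻¹ • ξs n with hu
    have hnorm : ∀ n, ‖u n‖ = 1 := by
      intro n
      rw [hu]
      simp only [norm_smul, norm_inv, Complex.norm_real, Real.norm_eq_abs,
        abs_of_pos (hpos n)]
      exact inv_mul_cancel₀ (hpos n).ne'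
    have hTu : ∀ n, ‖T0 (u n)‖ < 1 / ((n : ℝ) + 1) := by
      intro n
      rw [hu, map_smul, norm_smul, norm_inv, Complex.norm_real, Real.norm_eq_abs,
        abs_of_pos (hpos n), inv_mul_eq_div, div_lt_div_iff₀ (hpos n) (by positivity)]
      nlinarith [hξs n]
    obtain ⟨ψ, φ, hφ, htend⟩ := key u (fun n => (hnorm n).le)
    have hTtend : Filter.Tendsto (fun n => T0 (u (φ n))) Filter.atTop (𝓝 0) := by
      rw [tendsto_zero_iff_norm_tendsto_zero]
      refine squeeze_zero (fun n => norm_nonneg _) (fun n => ?_)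
        tendsto_one_div_add_atTop_nhds_zero_nat
      refine (hTu (φ n)).le.trans ?_
      apply one_div_le_one_div_of_le (by positivity)
      have : (n : ℝ) ≤ (φ n : ℝ) := Nat.cast_le.mpr hφ.le_apply
      linarith
    have hStend : Filter.Tendsto (fun n => S x₁ (u (φ n)) + Complex.I • ι (u (φ n)))
        Filter.atTop (𝓝 (-(A ψ) + Complex.I • ψ)) := by
      have h1 : ∀ n, S x₁ (u (φ n)) + Complex.I • ι (u (φ n))
          = T0 (u (φ n)) - A (ι (u (φ n))) + Complex.I • ι (u (φ n)) := by
        intro n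
        rw [hT0app]
        abel
      have h2 := (hTtend.sub ((A.continuous.tendsto ψ).comp htend)).add
        (htend.const_smul Complex.I)
      rw [zero_sub] at h2
      exact h2.congr fun n => (h1 n).symm
    set v : W := Rp x₁ (-(A ψ) + Complex.I • ψ) with hv
    have hutend : Filter.Tendsto (fun n => u (φ n)) Filter.atTop (𝓝 v) := by
      have h2 := ((Rp x₁).continuous.tendsto _).comp hStend
      exact h2.congr fun n => hRp2 x₁ (u (φ n))
    have hv1 : ‖v‖ = 1 := by
      have h3 := (continuous_norm.tendsto v).comp hutend
      have h4 : Filter.Tendsto (fun n => ‖u (φ n)‖) Filter.atTop (𝓝 1) := by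
        have : (fun n => ‖u (φ n)‖) = fun _ => (1 : ℝ) := funext fun n => hnorm (φ n)
        rw [this]
        exact tendsto_const_nhds
      exact tendsto_nhds_unique h3 h4
    have hTv : T0 v = 0 := tendsto_nhds_unique ((T0.continuous.tendsto v).comp hutend) hTtend
    rw [hinj v hTv] at hv1
    simp at hv1
  -- conclusion
  obtain ⟨c, hc, hcb⟩ := hbdd
  set ε : ℝ := (2 * c)⁻¹ with hε
  have hεpos : 0 < ε := by positivity
  have hUopen : IsOpen {y : X | ‖S y - S x₁‖ < ε} :=
    isOpen_lt ((hS_cont.sub continuous_const).norm) continuous_const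
  have hx₁U : x₁ ∈ {y : X | ‖S y - S x₁‖ < ε} := by
    simp only [Set.mem_setOf_eq, sub_self, norm_zero]
    exact hεpos
  obtain ⟨Kc, hKc, hKint, hKsub⟩ := exists_compact_subset hUopen hx₁U
  refine ⟨A, hAcpt, hAsa, interior Kc, isOpen_interior, hKint,
    hKc.of_isClosed_subset isClosed_closure (closure_minimal interior_subset hKc.isClosed),
    2 * c * (‖ι‖ + 1), by positivity, ?_⟩
  intro y hy
  have hyU : ‖S y - S x₁‖ < ε := hKsub (interior_subset hy)
  have hce : c * ε = 1 / 2 := by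
    rw [hε]
    field_simp
  have hbd : ∀ ξ : W, ‖ξ‖ ≤ (2 * c) * ‖S y ξ + A (ι ξ)‖ := by
    intro ξ
    have h1 := hcb ξ
    have h2 : ‖(S y - S x₁) ξ‖ ≤ ε * ‖ξ‖ :=
      le_trans ((S y - S x₁).le_opNorm ξ) (mul_le_mul_of_nonneg_right hyU.le (norm_nonneg _))
    have h3 : T0 ξ = (S y ξ + A (ι ξ)) - (S y - S x₁) ξ := by
      rw [hT0app, ContinuousLinearMap.sub_apply]
      abel
    have h4 : ‖T0 ξ‖ ≤ ‖S y ξ + A (ι ξ)‖ + ε * ‖ξ‖ := by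
      rw [h3]
      exact (norm_sub_le _ _).trans (by linarith)
    have h5 := mul_le_mul_of_nonneg_left h4 hc.le
    nlinarith [norm_nonneg (S y ξ + A (ι ξ)), norm_nonneg ξ]
  refine ⟨aux_bijective ι (S y) A hAsymm (fun ξ η => h_symm y ξ η) (Rp y) (Rm y)
    (hRp1 y) (hRm1 y) (2 * c) hbd, ?_⟩
  intro ξ
  have h5 : ‖ι ξ‖ ≤ ‖ι‖ * ‖ξ‖ := ι.le_opNorm ξ
  have h6 := mul_le_mul_of_nonneg_left (hbd ξ) (norm_nonneg ι)
  nlinarith [norm_nonneg (S y ξ + A (ι ξ)), norm_nonneg ξ]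
end

section
/- Let M be a connected topological space (in the paper, a connected Riemannian manifold) and let {S(x)}_{x∈M} be a family of self-adjoint operators on a complex Hilbert space H, all with the same dense domain W, such that x ↦ S(x) is norm-continuous from M into the bounded operators (W, ‖·‖_W) → H, where ‖·‖_W is the graph norm of S(x₀) for a fixed x₀ ∈ M. Suppose there are a compact set K ⊆ M and c > 0 such that S(x) : W → H is bijective with ‖S(x)⁻¹‖ ≤ c for all x ∈ M∖K, and suppose there is a finite open cover {V_j}_{j=1}^l of M∖K together with points x_j in the closure of V_j at which S(x_j) : W → H is bijective with bounded inverse, and numbers a_j < 1, such that ‖(S(x) − S(x_j))ξ‖ ≤ a_j‖S(x_j)ξ‖ for all x ∈ V_j and ξ ∈ W. Then the graph norms of the operators S(x) are uniformly equivalent: there exist constants C₁, C₂ > 0 such that C₁‖ξ‖_W ≤ (‖ξ‖² + ‖S(x)ξ‖²)^{1/2} ≤ C₂‖ξ‖_W for all x ∈ M and ξ ∈ W. [Hilbert-space case of Lemma 3.7 (uegn), under Standing Assumptions (A1)–(A4).] -/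
open Filter Topology

set_option maxHeartbeats 1000000 in
/-- Hilbert-space case of Lemma 3.7, `uegn`, under the Standing
Assumptions (A1)–(A4).
`M` is a connected topological space, and `{S(x)}_{x∈M}` is a norm-continuous family of
self-adjoint operators on `H` with common dense domain `W` (encoded as in Statement 2:
abstract complete normed space `W` with injective dense inclusion `ι : W →L[ℂ] H`, the
norm of `W` being the graph norm of `S x₀`; self-adjointness = symmetry plus surjectivity
of `S x ± i`).  Assume (A3): `S x` is bijective with `‖S(x)⁻¹‖ ≤ c` for `x ∉ K` (`K`
compact), and (A4): a finite open cover `{V j}` of `M∖K` with points `xj j ∈ closure (V j)`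
at which `S (xj j)` is bijective, and constants `0 < a j < 1` with
`‖(S x − S (xj j))ξ‖ ≤ a j · ‖S (xj j) ξ‖` for `x ∈ V j`.
Then the graph norms of the `S x` are uniformly equivalent. -/
theorem uegn
    {M : Type*} [TopologicalSpace M] [ConnectedSpace M]
    {H : Type*} [NormedAddCommGroup H] [InnerProductSpace ℂ H] [CompleteSpace H]
    {W : Type*} [NormedAddCommGroup W] [NormedSpace ℂ W] [CompleteSpace W]
    (ι : W →L[ℂ] H) (hι_inj : Function.Injective ι) (hι_dense : DenseRange ι)
    (S : M → (W →L[ℂ] H))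
    (x₀ : M) (h_graph : ∀ ξ : W, ‖ξ‖ ^ 2 = ‖ι ξ‖ ^ 2 + ‖S x₀ ξ‖ ^ 2)
    (h_symm : ∀ (x : M) (ξ η : W), (inner ℂ (S x ξ) (ι η) : ℂ) = inner ℂ (ι ξ) (S x η))
    (h_sa : ∀ (x : M) (ψ : H),
      (∃ ξ : W, S x ξ + Complex.I • ι ξ = ψ) ∧ (∃ ξ : W, S x ξ - Complex.I • ι ξ = ψ))
    (hS_cont : Continuous S)
    (K : Set M) (hK : IsCompact K)
    (c : ℝ) (hc : 0 < c)
    (h_inv : ∀ x ∉ K, Function.Bijective ⇑(S x) ∧ ∀ ξ : W, ‖ι ξ‖ ≤ c * ‖S x ξ‖)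
    (l : ℕ) (V : Fin l → Set M) (hV_open : ∀ j, IsOpen (V j))
    (h_cover : ∀ x : M, x ∉ K → ∃ j, x ∈ V j)
    (xj : Fin l → M) (hxj_mem : ∀ j, xj j ∈ closure (V j))
    (hxj_bij : ∀ j, Function.Bijective ⇑(S (xj j)))
    (a : Fin l → ℝ) (ha_pos : ∀ j, 0 < a j) (ha_lt : ∀ j, a j < 1)
    (h_small : ∀ j, ∀ x ∈ V j, ∀ ξ : W,
      ‖S x ξ - S (xj j) ξ‖ ≤ a j * ‖S (xj j) ξ‖) :
    ∃ C₁ : ℝ, 0 < C₁ ∧ ∃ C₂ : ℝ, 0 < C₂ ∧ ∀ (x : M) (ξ : W),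
      C₁ * ‖ξ‖ ≤ Real.sqrt (‖ι ξ‖ ^ 2 + ‖S x ξ‖ ^ 2) ∧
      Real.sqrt (‖ι ξ‖ ^ 2 + ‖S x ξ‖ ^ 2) ≤ C₂ * ‖ξ‖ := by
  classical
  -- The operators T x = S x + i ι
  set T : M → (W →L[ℂ] H) := fun x => S x + Complex.I • ι with hT_def
  have hT_apply : ∀ x ξ, T x ξ = S x ξ + Complex.I • ι ξ := by
    intro x ξ; simp [hT_def]
  -- norm identity  ‖T x ξ‖² = ‖ι ξ‖² + ‖S x ξ‖²
  have hT_norm : ∀ x ξ, ‖T x ξ‖ ^ 2 = ‖ι ξ‖ ^ 2 + ‖S x ξ‖ ^ 2 := by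
    intro x ξ
    have hz : ((inner ℂ (S x ξ) (ι ξ) : ℂ)).im = 0 := by
      rw [← Complex.conj_eq_iff_im]
      rw [inner_conj_symm]
      exact (h_symm x ξ ξ).symm
    have hre : RCLike.re (inner ℂ (S x ξ) (Complex.I • ι ξ) : ℂ) = 0 := by
      rw [inner_smul_right]
      simp [Complex.mul_re, hz]
    rw [hT_apply, norm_add_sq (𝕜 := ℂ), hre, norm_smul]
    simp [Complex.norm_I]
    ring
  -- T x is bijective for every x
  have hT_inj : ∀ x, Function.Injective (T x) := by
    intro x ξ η h
    have h0 : T x (ξ - η) = 0 := by rw [map_sub, h, sub_self]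
    have h1 : ‖ι (ξ - η)‖ ^ 2 + ‖S x (ξ - η)‖ ^ 2 = 0 := by
      rw [← hT_norm, h0, norm_zero]; ring
    have h2 : ‖ι (ξ - η)‖ ^ 2 = 0 := by nlinarith [sq_nonneg ‖ι (ξ - η)‖, sq_nonneg ‖S x (ξ - η)‖]
    have h3 : ι (ξ - η) = 0 := by
      have := pow_eq_zero_iff (n := 2) (by norm_num) |>.mp h2
      simpa [norm_eq_zero] using this
    have h4 : ι ξ = ι η := by
      have := h3; rw [map_sub, sub_eq_zero] at this; exact this
    exact hι_inj h4
  have hT_surj : ∀ x, Function.Surjective (T x) := by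
    intro x ψ
    obtain ⟨ξ, hξ⟩ := (h_sa x ψ).1
    exact ⟨ξ, by rw [hT_apply]; exact hξ⟩
  -- continuous linear equivalences
  have hT_cont : Continuous T := by
    apply hS_cont.add continuous_const
  let e : M → (W ≃L[ℂ] H) := fun x =>
    ContinuousLinearEquiv.ofBijective (T x) (LinearMap.ker_eq_bot.mpr (hT_inj x))
      (LinearMap.range_eq_top.mpr (hT_surj x))
  have he_apply : ∀ x ξ, e x ξ = T x ξ := fun x ξ => rfl
  let m : M → ℝ := fun x => ‖((e x).symm : H →L[ℂ] W)‖
  have hm_nonneg : ∀ x, 0 ≤ m x := fun x => norm_nonneg _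
  have hm_bound : ∀ x ξ, ‖ξ‖ ≤ m x * ‖T x ξ‖ := by
    intro x ξ
    have : ((e x).symm : H →L[ℂ] W) (T x ξ) = ξ := by
      have := (e x).symm_apply_apply ξ
      simpa [he_apply] using this
    calc ‖ξ‖ = ‖((e x).symm : H →L[ℂ] W) (T x ξ)‖ := by rw [this]
      _ ≤ m x * ‖T x ξ‖ := ((e x).symm : H →L[ℂ] W).le_opNorm _
  -- neighborhoods on which the bound propagates
  let U : M → Set M := fun y => {x | ‖T x - T y‖ * (2 * (m y + 1)) < 1}
  have hU_mem : ∀ y, U y ∈ nhds y := by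
    intro y
    have hopen : IsOpen (U y) := by
      have : Continuous fun x => ‖T x - T y‖ * (2 * (m y + 1)) :=
        ((hT_cont.sub continuous_const).norm).mul continuous_const
      exact isOpen_lt this continuous_const
    have hy : y ∈ U y := by simp [U]
    exact hopen.mem_nhds hy
  obtain ⟨t, _, ht_cover⟩ := hK.elim_nhds_subcover U (fun y _ => hU_mem y)
  set CK : ℝ := ∑ y ∈ t, 2 * (m y + 1) with hCK_def
  have hCK_nonneg : 0 ≤ CK := Finset.sum_nonneg fun y _ => by nlinarith [hm_nonneg y]
  have hK_bound : ∀ x ∈ K, ∀ ξ : W, ‖ξ‖ ≤ CK * ‖T x ξ‖ := by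
    intro x hx ξ
    obtain ⟨y, hyt, hxy⟩ := Set.mem_iUnion₂.mp (ht_cover hx)
    have hd : ‖T x - T y‖ * (2 * (m y + 1)) < 1 := hxy
    have hd0 : (0:ℝ) ≤ ‖T x - T y‖ := norm_nonneg _
    have h1 : ‖ξ‖ ≤ m y * ‖T y ξ‖ := hm_bound y ξ
    have h2 : ‖T y ξ‖ ≤ ‖T x ξ‖ + ‖T x - T y‖ * ‖ξ‖ := by
      calc ‖T y ξ‖ = ‖T x ξ - (T x - T y) ξ‖ := by
              simp [ContinuousLinearMap.sub_apply]
        _ ≤ ‖T x ξ‖ + ‖(T x - T y) ξ‖ := norm_sub_le _ _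
        _ ≤ ‖T x ξ‖ + ‖T x - T y‖ * ‖ξ‖ := by
              have := (T x - T y).le_opNorm ξ; linarith
    have hloc : ‖ξ‖ ≤ 2 * (m y + 1) * ‖T x ξ‖ := by
      nlinarith [hm_nonneg y, norm_nonneg ξ, norm_nonneg (T x ξ),
        mul_le_mul_of_nonneg_left h2 (hm_nonneg y),
        mul_nonneg (mul_nonneg hd0 (norm_nonneg ξ)) (norm_nonneg (T x ξ))]
    have hterm : 2 * (m y + 1) ≤ CK :=
      Finset.single_le_sum (f := fun y => 2 * (m y + 1))
        (fun z _ => by linarith [hm_nonneg z]) hyt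
    calc ‖ξ‖ ≤ 2 * (m y + 1) * ‖T x ξ‖ := hloc
      _ ≤ CK * ‖T x ξ‖ := mul_le_mul_of_nonneg_right hterm (norm_nonneg _)
  -- equivalences for the S (xj j)
  let E : Fin l → (W ≃L[ℂ] H) := fun j =>
    ContinuousLinearEquiv.ofBijective (S (xj j)) (LinearMap.ker_eq_bot.mpr (hxj_bij j).1)
      (LinearMap.range_eq_top.mpr (hxj_bij j).2)
  set B : ℝ := ∑ j, (‖((E j).symm : H →L[ℂ] W)‖ + 1) * (1 - a j)⁻¹ with hB_def
  have hBj_nonneg : ∀ j : Fin l, 0 ≤ (‖((E j).symm : H →L[ℂ] W)‖ + 1) * (1 - a j)⁻¹ := by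
    intro j
    have := norm_nonneg ((E j).symm : H →L[ℂ] W)
    have h1 : (0:ℝ) < 1 - a j := by linarith [ha_lt j]
    positivity
  have hB_nonneg : 0 ≤ B := Finset.sum_nonneg fun j _ => hBj_nonneg j
  have hKc_bound : ∀ x ∉ K, ∀ ξ : W, ‖ξ‖ ≤ B * ‖S x ξ‖ := by
    intro x hx ξ
    obtain ⟨j, hj⟩ := h_cover x hx
    have h1 : (0:ℝ) < 1 - a j := by linarith [ha_lt j]
    have hsm := h_small j x hj ξ
    have h2 : ‖S (xj j) ξ‖ ≤ ‖S x ξ‖ + a j * ‖S (xj j) ξ‖ := by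
      calc ‖S (xj j) ξ‖ = ‖S x ξ - (S x ξ - S (xj j) ξ)‖ := by rw [sub_sub_cancel]
        _ ≤ ‖S x ξ‖ + ‖S x ξ - S (xj j) ξ‖ := norm_sub_le _ _
        _ ≤ ‖S x ξ‖ + a j * ‖S (xj j) ξ‖ := by linarith
    have h3 : ‖S (xj j) ξ‖ ≤ (1 - a j)⁻¹ * ‖S x ξ‖ := by
      rw [le_inv_mul_iff₀ h1]; nlinarith
    have h4 : ‖ξ‖ ≤ ‖((E j).symm : H →L[ℂ] W)‖ * ‖S (xj j) ξ‖ := by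
      have heq : ((E j).symm : H →L[ℂ] W) (S (xj j) ξ) = ξ := (E j).symm_apply_apply ξ
      calc ‖ξ‖ = ‖((E j).symm : H →L[ℂ] W) (S (xj j) ξ)‖ := by rw [heq]
        _ ≤ _ := ((E j).symm : H →L[ℂ] W).le_opNorm _
    have h5 : ‖ξ‖ ≤ (‖((E j).symm : H →L[ℂ] W)‖ + 1) * (1 - a j)⁻¹ * ‖S x ξ‖ := by
      have hn := norm_nonneg ((E j).symm : H →L[ℂ] W)
      have hi : (0:ℝ) < (1 - a j)⁻¹ := by positivity
      nlinarith [norm_nonneg (S (xj j) ξ), norm_nonneg (S x ξ)]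
    have hterm : (‖((E j).symm : H →L[ℂ] W)‖ + 1) * (1 - a j)⁻¹ ≤ B :=
      Finset.single_le_sum (fun z _ => hBj_nonneg z) (Finset.mem_univ j)
    calc ‖ξ‖ ≤ _ := h5
      _ ≤ B * ‖S x ξ‖ := mul_le_mul_of_nonneg_right hterm (norm_nonneg _)
  -- uniform lower bound constant
  set D : ℝ := CK + B + 1 with hD_def
  have hD_pos : 0 < D := by rw [hD_def]; linarith
  have h_lower : ∀ x ξ, ‖ξ‖ ≤ D * Real.sqrt (‖ι ξ‖ ^ 2 + ‖S x ξ‖ ^ 2) := by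
    intro x ξ
    have hsq : Real.sqrt (‖ι ξ‖ ^ 2 + ‖S x ξ‖ ^ 2) = ‖T x ξ‖ := by
      rw [← hT_norm, Real.sqrt_sq (norm_nonneg _)]
    rw [hsq]
    by_cases hx : x ∈ K
    · calc ‖ξ‖ ≤ CK * ‖T x ξ‖ := hK_bound x hx ξ
        _ ≤ D * ‖T x ξ‖ := by
            apply mul_le_mul_of_nonneg_right _ (norm_nonneg _); rw [hD_def]; linarith
    · have h1 : ‖ξ‖ ≤ B * ‖S x ξ‖ := hKc_bound x hx ξ
      have h2 : ‖S x ξ‖ ≤ ‖T x ξ‖ := by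
        have := hT_norm x ξ
        nlinarith [norm_nonneg (T x ξ), norm_nonneg (S x ξ), sq_nonneg ‖ι ξ‖]
      calc ‖ξ‖ ≤ B * ‖S x ξ‖ := h1
        _ ≤ B * ‖T x ξ‖ := mul_le_mul_of_nonneg_left h2 hB_nonneg
        _ ≤ D * ‖T x ξ‖ := by
            apply mul_le_mul_of_nonneg_right _ (norm_nonneg _); rw [hD_def]; linarith
  -- uniform upper bound on ‖S x‖
  obtain ⟨A₁, hA₁⟩ := hK.exists_bound_of_continuousOn hS_cont.continuousOn
  set A : ℝ := max A₁ 0 + ∑ j, 2 * ‖S (xj j)‖ with hA_def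
  have hsum_nonneg : (0:ℝ) ≤ ∑ j, 2 * ‖S (xj j)‖ :=
    Finset.sum_nonneg fun j _ => by positivity
  have hA_nonneg : 0 ≤ A := by
    rw [hA_def]; have := le_max_right A₁ (0:ℝ); linarith
  have h_upperS : ∀ x ξ, ‖S x ξ‖ ≤ A * ‖ξ‖ := by
    intro x ξ
    by_cases hx : x ∈ K
    · calc ‖S x ξ‖ ≤ ‖S x‖ * ‖ξ‖ := (S x).le_opNorm ξ
        _ ≤ A * ‖ξ‖ := by
            apply mul_le_mul_of_nonneg_right _ (norm_nonneg _)
            rw [hA_def]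
            have := hA₁ x hx
            have := le_max_left A₁ (0:ℝ)
            linarith
    · obtain ⟨j, hj⟩ := h_cover x hx
      have hsm := h_small j x hj ξ
      have h2 : ‖S x ξ‖ ≤ 2 * ‖S (xj j) ξ‖ := by
        calc ‖S x ξ‖ = ‖(S x ξ - S (xj j) ξ) + S (xj j) ξ‖ := by rw [sub_add_cancel]
          _ ≤ ‖S x ξ - S (xj j) ξ‖ + ‖S (xj j) ξ‖ := norm_add_le _ _
          _ ≤ 2 * ‖S (xj j) ξ‖ := by nlinarith [ha_lt j, norm_nonneg (S (xj j) ξ)]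
      have h3 : ‖S (xj j) ξ‖ ≤ ‖S (xj j)‖ * ‖ξ‖ := (S (xj j)).le_opNorm ξ
      have hterm : 2 * ‖S (xj j)‖ ≤ ∑ j', 2 * ‖S (xj j')‖ :=
        Finset.single_le_sum (f := fun j' => 2 * ‖S (xj j')‖)
          (fun z _ => by positivity) (Finset.mem_univ j)
      have hmax : (0:ℝ) ≤ max A₁ 0 := le_max_right _ _
      calc ‖S x ξ‖ ≤ 2 * ‖S (xj j) ξ‖ := h2
        _ ≤ 2 * ‖S (xj j)‖ * ‖ξ‖ := by nlinarith
        _ ≤ A * ‖ξ‖ := by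
            apply mul_le_mul_of_nonneg_right _ (norm_nonneg _)
            rw [hA_def]; linarith
  -- assemble
  refine ⟨D⁻¹, inv_pos.mpr hD_pos, Real.sqrt (1 + A ^ 2), Real.sqrt_pos.mpr (by positivity), fun x ξ => ?_⟩
  constructor
  · have h := h_lower x ξ
    have hs : 0 ≤ Real.sqrt (‖ι ξ‖ ^ 2 + ‖S x ξ‖ ^ 2) := Real.sqrt_nonneg _
    calc D⁻¹ * ‖ξ‖ ≤ D⁻¹ * (D * Real.sqrt (‖ι ξ‖ ^ 2 + ‖S x ξ‖ ^ 2)) :=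
          mul_le_mul_of_nonneg_left h (inv_nonneg.mpr hD_pos.le)
      _ = Real.sqrt (‖ι ξ‖ ^ 2 + ‖S x ξ‖ ^ 2) := by
          rw [← mul_assoc, inv_mul_cancel₀ (ne_of_gt hD_pos), one_mul]
  · have hι : ‖ι ξ‖ ^ 2 ≤ ‖ξ‖ ^ 2 := by nlinarith [h_graph ξ, sq_nonneg ‖S x₀ ξ‖]
    have hS : ‖S x ξ‖ ^ 2 ≤ A ^ 2 * ‖ξ‖ ^ 2 := by
      have := h_upperS x ξ
      nlinarith [norm_nonneg (S x ξ), norm_nonneg ξ]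
    calc Real.sqrt (‖ι ξ‖ ^ 2 + ‖S x ξ‖ ^ 2)
        ≤ Real.sqrt ((1 + A ^ 2) * ‖ξ‖ ^ 2) := by
          apply Real.sqrt_le_sqrt; nlinarith
      _ = Real.sqrt (1 + A ^ 2) * ‖ξ‖ := by
          rw [Real.sqrt_mul (by positivity), Real.sqrt_sq (norm_nonneg _)]
end

section
/- Let M be a metric space, U ⊆ M an open set with closure Ū, and x ∈ U. Let H be a complex Hilbert space, W ⊆ H a dense linear subspace, and {S(y)}_{y∈Ū} a family of self-adjoint operators on H, all with domain W, such that y ↦ S(y) is norm-continuous from Ū into the bounded operators from (W, graph norm of S(x)) to H. Let a ∈ [0,1) and suppose ‖(S(y) − S(x))ξ‖ ≤ a‖(S(x)+i)ξ‖ for all y ∈ Ū and all ξ ∈ W. Then there exists a family {S^U(y)}_{y∈M} of self-adjoint operators on H, all with domain W, such that y ↦ S^U(y) is norm-continuous from M into the bounded operators (W, graph norm of S(x)) → H, S^U(y) = S(y) for all y ∈ Ū, and ‖(S^U(y) − S(x))ξ‖ ≤ a‖(S(x)+i)ξ‖ for all y ∈ M and all ξ ∈ W. [Hilbert-space case of Lemma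 3.9(1) (extension).] -/
open Filter Topology

/-- Kato–Rellich style surjectivity: if `A` is a surjective isometry and `‖B ξ‖ ≤ a‖ξ‖`
with `a < 1`, then `B + A` is surjective (Banach fixed point argument). -/
private lemma extension_one_surj
    {H : Type*} [NormedAddCommGroup H] [InnerProductSpace ℂ H]
    {W : Type*} [NormedAddCommGroup W] [NormedSpace ℂ W] [CompleteSpace W]
    (A B : W →L[ℂ] H) (hAn : ∀ ξ : W, ‖A ξ‖ = ‖ξ‖) (hAs : Function.Surjective A)
    {a : ℝ} (ha0 : 0 ≤ a) (ha1 : a < 1) (hB : ∀ ξ : W, ‖B ξ‖ ≤ a * ‖ξ‖) (ψ : H) :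
    ∃ ξ : W, B ξ + A ξ = ψ := by
  have : Nonempty W := ⟨0⟩
  have hAi : Function.Injective A := by
    intro u v huv
    have h1 : ‖u - v‖ = 0 := by
      have h2 := hAn (u - v)
      rw [map_sub, huv, sub_self, norm_zero] at h2
      exact h2.symm
    rwa [norm_eq_zero, sub_eq_zero] at h1
  let e : W ≃ₗ[ℂ] H := LinearEquiv.ofBijective (A : W →ₗ[ℂ] H) ⟨hAi, hAs⟩
  have he : ∀ ξ, e ξ = A ξ := fun ξ => rfl
  have hesn : ∀ u, ‖e.symm u‖ = ‖u‖ := by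
    intro u
    conv_rhs => rw [← e.apply_symm_apply u]
    rw [he, hAn]
  set Φ : W → W := fun ξ => e.symm (ψ - B ξ) with hΦ
  have hL : LipschitzWith ⟨a, ha0⟩ Φ := by
    apply LipschitzWith.of_dist_le_mul
    intro ξ η
    rw [dist_eq_norm, dist_eq_norm]
    have h3 : Φ ξ - Φ η = e.symm (B (η - ξ)) := by
      simp only [hΦ, ← map_sub]
      congr 1
      rw [map_sub]
      abel
    rw [h3, hesn]
    calc ‖B (η - ξ)‖ ≤ a * ‖η - ξ‖ := hB _
      _ = a * ‖ξ - η‖ := by rw [norm_sub_rev]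
  have hCo : ContractingWith ⟨a, ha0⟩ Φ := ⟨by exact_mod_cast ha1, hL⟩
  refine ⟨ContractingWith.fixedPoint Φ hCo, ?_⟩
  have hfix : Φ (ContractingWith.fixedPoint Φ hCo) = ContractingWith.fixedPoint Φ hCo :=
    hCo.fixedPoint_isFixedPt
  set ξ := ContractingWith.fixedPoint Φ hCo
  have h4 : e ξ = ψ - B ξ := by
    conv_lhs => rw [← hfix]
    exact e.apply_symm_apply _
  rw [he] at h4
  rw [h4]; abel

set_option maxHeartbeats 1000000 in
set_option synthInstance.maxHeartbeats 400000 in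
/-- Hilbert-space case of Lemma 3.9(1), `extension`.
`M` is a metric space, `U ⊆ M` open, `x ∈ U`.  `{S(y)}_{y∈Ū}` is a family of self-adjoint
operators on `H` with common dense domain `W` (encoded as the abstract complete normed
space `W` with injective dense inclusion `ι : W →L[ℂ] H`, whose norm is the graph norm of
`S x`; self-adjointness of `S y` for `y ∈ Ū` = symmetry plus surjectivity of `S y ± i`),
norm-continuous on `closure U` (`S` is a total function, constrained only on `closure U`).
If `‖(S y − S x)ξ‖ ≤ a‖(S x + i)ξ‖` for all `y ∈ Ū`, `ξ ∈ W`, with `a ∈ [0,1)`, then there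
is a norm-continuous family `{SU y}_{y∈M}` of self-adjoint operators with domain `W`
extending `S|_Ū` and satisfying the same bound for all `y ∈ M`. -/
theorem extension_one
    {M : Type*} [MetricSpace M]
    {H : Type*} [NormedAddCommGroup H] [InnerProductSpace ℂ H] [CompleteSpace H]
    {W : Type*} [NormedAddCommGroup W] [NormedSpace ℂ W] [CompleteSpace W]
    (ι : W →L[ℂ] H) (hι_inj : Function.Injective ι) (hι_dense : DenseRange ι)
    (U : Set M) (hU : IsOpen U) (x : M) (hx : x ∈ U)
    (S : M → (W →L[ℂ] H))
    (hS_cont : ContinuousOn S (closure U))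
    (h_graph : ∀ ξ : W, ‖ξ‖ ^ 2 = ‖ι ξ‖ ^ 2 + ‖S x ξ‖ ^ 2)
    (h_symm : ∀ y ∈ closure U, ∀ (ξ η : W),
      (inner ℂ (S y ξ) (ι η) : ℂ) = inner ℂ (ι ξ) (S y η))
    (h_sa : ∀ y ∈ closure U, ∀ ψ : H,
      (∃ ξ : W, S y ξ + Complex.I • ι ξ = ψ) ∧ (∃ ξ : W, S y ξ - Complex.I • ι ξ = ψ))
    (a : ℝ) (ha0 : 0 ≤ a) (ha1 : a < 1)
    (h_small : ∀ y ∈ closure U, ∀ ξ : W,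
      ‖S y ξ - S x ξ‖ ≤ a * ‖S x ξ + Complex.I • ι ξ‖) :
    ∃ SU : M → (W →L[ℂ] H),
      Continuous SU ∧
      (∀ y ∈ closure U, SU y = S y) ∧
      (∀ (y : M) (ξ η : W), (inner ℂ (SU y ξ) (ι η) : ℂ) = inner ℂ (ι ξ) (SU y η)) ∧
      (∀ (y : M) (ψ : H),
        (∃ ξ : W, SU y ξ + Complex.I • ι ξ = ψ) ∧
        (∃ ξ : W, SU y ξ - Complex.I • ι ξ = ψ)) ∧
      (∀ (y : M) (ξ : W), ‖SU y ξ - S x ξ‖ ≤ a * ‖S x ξ + Complex.I • ι ξ‖) := by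
  classical
  set C : Set M := closure U with hCdef
  have hxC : x ∈ C := subset_closure hx
  have hCc : IsClosed C := isClosed_closure
  -- the inner product ⟪S x ξ, ι ξ⟫ is real
  have him : ∀ ξ : W, (inner ℂ (S x ξ) (ι ξ) : ℂ).im = 0 := by
    intro ξ
    have h1 := h_symm x hxC ξ ξ
    have h2 : (inner ℂ (ι ξ) (S x ξ) : ℂ) = (starRingEnd ℂ) (inner ℂ (S x ξ) (ι ξ) : ℂ) :=
      (inner_conj_symm _ _).symm
    rw [h2] at h1
    exact Complex.conj_eq_iff_im.mp h1.symm
  have hsq : ∀ s t : ℝ, 0 ≤ s → 0 ≤ t → s ^ 2 = t ^ 2 → s = t := by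
    intro s t hs ht h
    calc s = Real.sqrt (s ^ 2) := by rw [Real.sqrt_sq hs]
      _ = Real.sqrt (t ^ 2) := by rw [h]
      _ = t := Real.sqrt_sq ht
  have hnorm2 : ∀ ξ : W, ‖S x ξ + Complex.I • ι ξ‖ = ‖ξ‖ ∧ ‖S x ξ - Complex.I • ι ξ‖ = ‖ξ‖ := by
    intro ξ
    have hre : RCLike.re (inner ℂ (S x ξ) (Complex.I • ι ξ) : ℂ) = 0 := by
      rw [inner_smul_right]
      simp [RCLike.re_to_complex, Complex.mul_re, him ξ]
    have hIn : ‖Complex.I • ι ξ‖ = ‖ι ξ‖ := by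
      rw [norm_smul]; simp
    constructor
    · refine hsq _ _ (norm_nonneg _) (norm_nonneg _) ?_
      rw [norm_add_sq (𝕜 := ℂ), hre, hIn, h_graph ξ]; ring
    · refine hsq _ _ (norm_nonneg _) (norm_nonneg _) ?_
      rw [norm_sub_sq (𝕜 := ℂ), hre, hIn, h_graph ξ]; ring
  -- the complement of C, the Dugundji construction
  set V : Set M := Cᶜ with hVdef
  have hVopen : IsOpen V := hCc.isOpen_compl
  set d : ↥V → ℝ := fun c => Metric.infDist (c : M) C with hddef
  have hdpos : ∀ c : ↥V, 0 < d c := by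
    intro c
    exact (hCc.notMem_iff_infDist_pos ⟨x, hxC⟩).mp c.2
  have hpex : ∀ c : ↥V, ∃ z ∈ C, dist (c : M) z < 2 * d c := by
    intro c
    refine (Metric.infDist_lt_iff ⟨x, hxC⟩).mp ?_
    have := hdpos c
    simp only [hddef] at this ⊢
    linarith
  choose p hpC hpd using hpex
  set Vb : ↥V → Set ↥V := fun c => Subtype.val ⁻¹' Metric.ball (c : M) (d c / 4) with hVbdef
  have hVbopen : ∀ c, IsOpen (Vb c) := fun c =>
    Metric.isOpen_ball.preimage continuous_subtype_val
  have hVbcover : (Set.univ : Set ↥V) ⊆ ⋃ c, Vb c := by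
    intro v _
    refine Set.mem_iUnion.mpr ⟨v, ?_⟩
    simp only [hVbdef, Set.mem_preimage, Metric.mem_ball, dist_self]
    linarith [hdpos v]
  obtain ⟨f, hf⟩ := PartitionOfUnity.exists_isSubordinate (ι := ↥V) (X := ↥V)
    isClosed_univ Vb hVbopen hVbcover
  set F : ↥V → (W →L[ℂ] H) := fun v => ∑ᶠ c, f c v • S (p c) with hFdef
  have hFcont : Continuous F := hf.continuous_finsum_smul hVbopen fun c => continuousOn_const
  set SU : M → (W →L[ℂ] H) := fun y => if h : y ∈ C then S y else F ⟨y, h⟩ with hSUdef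
  have hSU_eq : ∀ y ∈ C, SU y = S y := by
    intro y hy
    simp only [hSUdef, dif_pos hy]
  have hSU_eqF : ∀ (y : M) (hy : y ∉ C), SU y = F ⟨y, hy⟩ := by
    intro y hy
    simp only [hSUdef, dif_neg hy]
  -- finite-sum representation of F
  have hJ : ∀ v : ↥V, ∃ J : Finset ↥V,
      (∀ c, c ∈ J ↔ f c v ≠ 0) ∧ (∑ c ∈ J, f c v) = 1 ∧
        F v = ∑ c ∈ J, f c v • S (p c) := by
    intro v
    have hfin : {c : ↥V | v ∈ Function.support fun z => f c z}.Finite :=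
      f.locallyFinite.point_finite v
    refine ⟨hfin.toFinset, ?_, ?_, ?_⟩
    · intro c
      simp [Function.mem_support]
    · rw [← f.sum_eq_one (Set.mem_univ v)]
      refine (finsum_eq_sum_of_support_subset _ ?_).symm
      intro c hc
      simpa using hc
    · rw [hFdef]
      refine finsum_eq_sum_of_support_subset _ ?_
      intro c hc
      simp only [Function.mem_support] at hc
      simp only [Set.Finite.coe_toFinset, Set.mem_setOf_eq, Function.mem_support]
      intro h0
      exact hc (by rw [h0, zero_smul])
  -- convex combinations of the operators S (p c) satisfy symmetry and the bound
  have hcomb : ∀ (J : Finset ↥V) (w : ↥V → ℝ),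
      (∀ c ∈ J, 0 ≤ w c) → (∑ c ∈ J, w c) = 1 →
      (∀ ξ η : W, (inner ℂ ((∑ c ∈ J, w c • S (p c)) ξ) (ι η) : ℂ)
          = inner ℂ (ι ξ) ((∑ c ∈ J, w c • S (p c)) η)) ∧
      (∀ ξ : W, ‖(∑ c ∈ J, w c • S (p c)) ξ - S x ξ‖ ≤ a * ‖S x ξ + Complex.I • ι ξ‖) := by
    intro J w hw0 hw1
    have happ : ∀ ξ : W, ((∑ c ∈ J, w c • S (p c)) ξ) = ∑ c ∈ J, w c • (S (p c) ξ) := by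
      intro ξ
      simp [ContinuousLinearMap.sum_apply]
    constructor
    · intro ξ η
      rw [happ, happ, sum_inner, inner_sum]
      refine Finset.sum_congr rfl fun c _ => ?_
      rw [RCLike.real_smul_eq_coe_smul (K := ℂ) (w c) (S (p c) ξ),
        RCLike.real_smul_eq_coe_smul (K := ℂ) (w c) (S (p c) η),
        inner_smul_left, inner_smul_right, RCLike.conj_ofReal,
        h_symm (p c) (hpC c) ξ η]
    · intro ξ
      have h1 : (∑ c ∈ J, w c • S (p c)) ξ - S x ξ
          = ∑ c ∈ J, w c • (S (p c) ξ - S x ξ) := by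
        have h2 : ∑ c ∈ J, w c • (S (p c) ξ - S x ξ)
            = (∑ c ∈ J, w c • (S (p c) ξ)) - (∑ c ∈ J, w c) • S x ξ := by
          rw [Finset.sum_smul, ← Finset.sum_sub_distrib]
          exact Finset.sum_congr rfl fun c _ => smul_sub _ _ _
        rw [h2, hw1, one_smul, happ]
      rw [h1]
      calc ‖∑ c ∈ J, w c • (S (p c) ξ - S x ξ)‖
          ≤ ∑ c ∈ J, ‖w c • (S (p c) ξ - S x ξ)‖ := norm_sum_le _ _
        _ ≤ ∑ c ∈ J, w c * (a * ‖S x ξ + Complex.I • ι ξ‖) := by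
            refine Finset.sum_le_sum fun c hc => ?_
            rw [norm_smul, Real.norm_eq_abs, abs_of_nonneg (hw0 c hc)]
            exact mul_le_mul_of_nonneg_left (h_small (p c) (hpC c) ξ) (hw0 c hc)
        _ = a * ‖S x ξ + Complex.I • ι ξ‖ := by rw [← Finset.sum_mul, hw1, one_mul]
  have hSU_symm : ∀ (y : M) (ξ η : W),
      (inner ℂ (SU y ξ) (ι η) : ℂ) = inner ℂ (ι ξ) (SU y η) := by
    intro y ξ η
    by_cases hy : y ∈ C
    · rw [hSU_eq y hy]; exact h_symm y hy ξ η
    · obtain ⟨J, hJmem, hJ1, hJF⟩ := hJ ⟨y, hy⟩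
      rw [hSU_eqF y hy, hJF]
      exact (hcomb J _ (fun c _ => f.nonneg c _) hJ1).1 ξ η
  have hSU_bound : ∀ (y : M) (ξ : W),
      ‖SU y ξ - S x ξ‖ ≤ a * ‖S x ξ + Complex.I • ι ξ‖ := by
    intro y ξ
    by_cases hy : y ∈ C
    · rw [hSU_eq y hy]; exact h_small y hy ξ
    · obtain ⟨J, hJmem, hJ1, hJF⟩ := hJ ⟨y, hy⟩
      rw [hSU_eqF y hy, hJF]
      exact (hcomb J _ (fun c _ => f.nonneg c _) hJ1).2 ξ
  -- continuity
  have hSU_cont : Continuous SU := by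
    rw [continuous_iff_continuousAt]
    intro y
    by_cases hy : y ∈ C
    · rw [Metric.continuousAt_iff]
      intro ε hε
      have hε2 : 0 < ε / 2 := by linarith
      obtain ⟨δ₁, hδ₁pos, hδ₁⟩ := Metric.continuousWithinAt_iff.mp (hS_cont y hy) (ε / 2) hε2
      refine ⟨δ₁ / 5, by linarith, ?_⟩
      intro y' hy'
      rw [hSU_eq y hy]
      by_cases hy'C : y' ∈ C
      · rw [hSU_eq y' hy'C]
        exact lt_trans (hδ₁ hy'C (by linarith [hy'])) (by linarith)
      · set v : ↥V := ⟨y', hy'C⟩ with hvdef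
        obtain ⟨J, hJmem, hJ1, hJF⟩ := hJ v
        rw [hSU_eqF y' hy'C, hJF, dist_eq_norm]
        have hdiff : (∑ c ∈ J, f c v • S (p c)) - S y = ∑ c ∈ J, f c v • (S (p c) - S y) := by
          have h2 : ∑ c ∈ J, f c v • (S (p c) - S y)
              = (∑ c ∈ J, f c v • S (p c)) - (∑ c ∈ J, f c v) • S y := by
            rw [Finset.sum_smul, ← Finset.sum_sub_distrib]
            exact Finset.sum_congr rfl fun c _ => smul_sub _ _ _
          rw [h2, hJ1, one_smul]
        rw [hdiff]
        have key : ∀ c ∈ J, ‖f c v • (S (p c) - S y)‖ ≤ f c v * (ε / 2) := by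
          intro c hc
          rw [norm_smul (f c v) (S (p c) - S y), Real.norm_eq_abs,
            abs_of_nonneg (f.nonneg c v)]
          refine mul_le_mul_of_nonneg_left ?_ (f.nonneg c v)
          have h0 : f c v ≠ 0 := (hJmem c).mp hc
          have hsupp : v ∈ Vb c := hf c (subset_closure (Function.mem_support.mpr h0))
          have h5 : dist y' (c : M) < d c / 4 := hsupp
          have h6 : d c ≤ dist (c : M) y := Metric.infDist_le_dist_of_mem hy
          have h7 : d c < 4 / 3 * (δ₁ / 5) := by
            have t1 := dist_triangle (c : M) y' y
            have t2 : dist (c : M) y' = dist y' (c : M) := dist_comm _ _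
            have t3 : dist y' y < δ₁ / 5 := hy'
            linarith
          have h8 : dist (p c) y < δ₁ := by
            have t1 : dist (p c) y ≤ dist (p c) (c : M) + dist (c : M) y' + dist y' y :=
              dist_triangle4 _ _ _ _
            have t2 : dist (p c) (c : M) = dist (c : M) (p c) := dist_comm _ _
            have t3 := hpd c
            have t4 : dist (c : M) y' = dist y' (c : M) := dist_comm _ _
            have t5 : dist y' y < δ₁ / 5 := hy'
            linarith
          have h9 := hδ₁ (hpC c) h8
          rw [dist_eq_norm] at h9
          exact le_of_lt h9
        calc ‖∑ c ∈ J, f c v • (S (p c) - S y)‖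
            ≤ ∑ c ∈ J, ‖f c v • (S (p c) - S y)‖ := norm_sum_le _ _
          _ ≤ ∑ c ∈ J, f c v * (ε / 2) := Finset.sum_le_sum key
          _ = ε / 2 := by rw [← Finset.sum_mul, hJ1, one_mul]
          _ < ε := by linarith
    · have hmem : V ∈ 𝓝 y := hVopen.mem_nhds hy
      have hco : ContinuousOn SU V := by
        rw [continuousOn_iff_continuous_restrict]
        have hres : Set.restrict V SU = F := by
          funext v
          exact hSU_eqF (v : M) v.2
        rw [show V.domRestrict SU = F from hres]
        exact hFcont
      exact hco.continuousAt hmem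
  -- surjectivity of SU y ± i
  obtain ⟨Ap, hApa⟩ : ∃ Ap : W →L[ℂ] H, ∀ ξ, Ap ξ = S x ξ + Complex.I • ι ξ :=
    ⟨S x + Complex.I • ι, fun ξ => by simp⟩
  obtain ⟨Am, hAma⟩ : ∃ Am : W →L[ℂ] H, ∀ ξ, Am ξ = S x ξ - Complex.I • ι ξ :=
    ⟨S x - Complex.I • ι, fun ξ => by simp⟩
  have hApn : ∀ ξ, ‖Ap ξ‖ = ‖ξ‖ := fun ξ => by rw [hApa]; exact (hnorm2 ξ).1
  have hAmn : ∀ ξ, ‖Am ξ‖ = ‖ξ‖ := fun ξ => by rw [hAma]; exact (hnorm2 ξ).2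
  have hAps : Function.Surjective Ap := by
    intro ψ
    obtain ⟨ξ, hξ⟩ := (h_sa x hxC ψ).1
    exact ⟨ξ, by rw [hApa]; exact hξ⟩
  have hAms : Function.Surjective Am := by
    intro ψ
    obtain ⟨ξ, hξ⟩ := (h_sa x hxC ψ).2
    exact ⟨ξ, by rw [hAma]; exact hξ⟩
  have hsurj : ∀ (y : M) (ψ : H),
      (∃ ξ : W, SU y ξ + Complex.I • ι ξ = ψ) ∧
      (∃ ξ : W, SU y ξ - Complex.I • ι ξ = ψ) := by
    intro y ψ
    obtain ⟨B, hBa⟩ : ∃ B : W →L[ℂ] H, ∀ ξ, B ξ = SU y ξ - S x ξ :=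
      ⟨SU y - S x, fun ξ => by simp⟩
    have hB : ∀ ξ, ‖B ξ‖ ≤ a * ‖ξ‖ := by
      intro ξ
      rw [hBa]
      calc ‖SU y ξ - S x ξ‖ ≤ a * ‖S x ξ + Complex.I • ι ξ‖ := hSU_bound y ξ
        _ = a * ‖ξ‖ := by rw [(hnorm2 ξ).1]
    constructor
    · obtain ⟨ξ, hξ⟩ := extension_one_surj Ap B hApn hAps ha0 ha1 hB ψ
      refine ⟨ξ, ?_⟩
      rw [← hξ, hApa, hBa]
      abel
    · obtain ⟨ξ, hξ⟩ := extension_one_surj Am B hAmn hAms ha0 ha1 hB ψ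
      refine ⟨ξ, ?_⟩
      rw [← hξ, hAma, hBa]
      abel
  exact ⟨SU, hSU_cont, hSU_eq, hSU_symm, hsurj, hSU_bound⟩
end

section
/- Let M be a metric space, U ⊆ M an open set with closure Ū, and x ∈ U. Let H be a complex Hilbert space, W ⊆ H a dense linear subspace, and {S(y)}_{y∈Ū} a family of self-adjoint operators on H, all with domain W, such that y ↦ S(y) is norm-continuous from Ū into the bounded operators from (W, graph norm of S(x)) to H. Suppose S(x) : W → H is bijective with bounded inverse S(x)⁻¹, let a ∈ [0,1), and suppose ‖(S(y) − S(x))ξ‖ ≤ a‖S(x)ξ‖ for all y ∈ Ū and all ξ ∈ W. Then there exists a family {S^U(y)}_{y∈M} of self-adjoint operators on H, all with domain W, such that y ↦ S^U(y) is norm-continuous from M into the bounded operators (W, graph norm of S(x)) → H, S^U(y) = S(y) for all y ∈ Ū, ‖(S^U(y) − S(x))ξ‖ ≤ a‖S(x)ξ‖ for all y ∈ M and ξ ∈ W, and moreover every S^U(y) : W → H is bijective with ‖S^U(y)⁻¹‖ ≤ (1−a)⁻¹‖S(x)⁻¹‖. [Hilbert-space case of Lemma 3.9(2) (extension).] -/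
open Filter Topology

set_option synthInstance.maxHeartbeats 1000000
set_option maxHeartbeats 2000000

section Aux

variable {H : Type*} [NormedAddCommGroup H] [InnerProductSpace ℂ H] [CompleteSpace H]
    {W : Type*} [NormedAddCommGroup W] [NormedSpace ℂ W] [CompleteSpace W]

/-- Neumann series / Kato–Rellich style perturbation: a continuous linear map that is a
small relative perturbation of a bijective one is itself bijective. -/
theorem aux_neumann (E T : W →L[ℂ] H) (hE : Function.Bijective E)
    (a : ℝ) (ha0 : 0 ≤ a) (ha1 : a < 1) (h : ∀ ξ : W, ‖T ξ - E ξ‖ ≤ a * ‖E ξ‖) :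
    Function.Bijective T := by
  have hker : LinearMap.ker (E : W →ₗ[ℂ] H) = ⊥ := (LinearMap.ker_eq_bot (f := (E : W →ₗ[ℂ] H))).mpr hE.1
  have hrange : LinearMap.range (E : W →ₗ[ℂ] H) = ⊤ := (LinearMap.range_eq_top (f := (E : W →ₗ[ℂ] H))).mpr hE.2
  let e := ContinuousLinearEquiv.ofBijective E hker hrange
  let D : W →L[ℂ] H := T - E
  let u : H →L[ℂ] H := D.comp (e.symm : H →L[ℂ] W)
  have hu : ‖u‖ ≤ a := by
    refine ContinuousLinearMap.opNorm_le_bound _ ha0 fun ψ => ?_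
    have h1 : u ψ = T (e.symm ψ) - E (e.symm ψ) := rfl
    have h2 : E (e.symm ψ) = ψ := e.apply_symm_apply ψ
    rw [h1]
    calc ‖T (e.symm ψ) - E (e.symm ψ)‖ ≤ a * ‖E (e.symm ψ)‖ := h _
    _ = a * ‖ψ‖ := by rw [h2]
  have hu' : ‖-u‖ < 1 := by rw [norm_neg]; exact lt_of_le_of_lt hu ha1
  let v : (H →L[ℂ] H)ˣ := Units.oneSub (-u) hu'
  have hvbij : Function.Bijective ⇑(v : H →L[ℂ] H) := by
    constructor
    · intro ψ φ hh
      have h3 := congrArg (⇑((v⁻¹ : (H →L[ℂ] H)ˣ) : H →L[ℂ] H)) hh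
      rwa [← ContinuousLinearMap.mul_apply, ← ContinuousLinearMap.mul_apply, v.inv_mul,
        ContinuousLinearMap.one_apply, ContinuousLinearMap.one_apply] at h3
    · intro ψ
      refine ⟨((v⁻¹ : (H →L[ℂ] H)ˣ) : H →L[ℂ] H) ψ, ?_⟩
      rw [← ContinuousLinearMap.mul_apply, v.mul_inv, ContinuousLinearMap.one_apply]
  have hTe : ⇑T = (⇑(v : H →L[ℂ] H)) ∘ ⇑e := by
    funext ξ
    have h4 : (v : H →L[ℂ] H) = 1 - (-u) := rfl
    have h5 : e ξ = E ξ := rfl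
    simp only [Function.comp_apply, h4, h5, ContinuousLinearMap.sub_apply,
      ContinuousLinearMap.one_apply, ContinuousLinearMap.neg_apply, sub_neg_eq_add,
      ContinuousLinearMap.add_apply]
    have h6 : u (E ξ) = T ξ - E ξ := by
      show D (e.symm (E ξ)) = T ξ - E ξ
      have : e.symm (E ξ) = ξ := e.symm_apply_apply ξ
      rw [this]; rfl
    rw [h6]; abel
  rw [hTe]
  exact hvbij.comp e.bijective

end Aux

/-- Hilbert-space case of Lemma 3.9(2), `extension`.
Setup as in Statement 9, but additionally `S x : W → H` is bijective with bounded inverse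
(`c` is a bound for `‖S(x)⁻¹‖`, expressed by `‖ι ξ‖ ≤ c‖S x ξ‖`), and the smallness
condition reads `‖(S y − S x)ξ‖ ≤ a‖S x ξ‖` on `Ū`.  Then there is a norm-continuous
family `{SU y}_{y∈M}` of self-adjoint operators with domain `W` extending `S|_Ū`,
satisfying the same bound globally, with every `SU y : W → H` bijective and
`‖SU(y)⁻¹‖ ≤ (1−a)⁻¹‖S(x)⁻¹‖`. -/
theorem extension_two
    {M : Type*} [MetricSpace M]
    {H : Type*} [NormedAddCommGroup H] [InnerProductSpace ℂ H] [CompleteSpace H]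
    {W : Type*} [NormedAddCommGroup W] [NormedSpace ℂ W] [CompleteSpace W]
    (ι : W →L[ℂ] H) (hι_inj : Function.Injective ι) (hι_dense : DenseRange ι)
    (U : Set M) (hU : IsOpen U) (x : M) (hx : x ∈ U)
    (S : M → (W →L[ℂ] H))
    (hS_cont : ContinuousOn S (closure U))
    (h_graph : ∀ ξ : W, ‖ξ‖ ^ 2 = ‖ι ξ‖ ^ 2 + ‖S x ξ‖ ^ 2)
    (h_symm : ∀ y ∈ closure U, ∀ (ξ η : W),
      (inner ℂ (S y ξ) (ι η) : ℂ) = inner ℂ (ι ξ) (S y η))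
    (h_sa : ∀ y ∈ closure U, ∀ ψ : H,
      (∃ ξ : W, S y ξ + Complex.I • ι ξ = ψ) ∧ (∃ ξ : W, S y ξ - Complex.I • ι ξ = ψ))
    (hx_bij : Function.Bijective ⇑(S x))
    (c : ℝ) (hc : ∀ ξ : W, ‖ι ξ‖ ≤ c * ‖S x ξ‖)
    (a : ℝ) (ha0 : 0 ≤ a) (ha1 : a < 1)
    (h_small : ∀ y ∈ closure U, ∀ ξ : W, ‖S y ξ - S x ξ‖ ≤ a * ‖S x ξ‖) :
    ∃ SU : M → (W →L[ℂ] H),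
      Continuous SU ∧
      (∀ y ∈ closure U, SU y = S y) ∧
      (∀ (y : M) (ξ η : W), (inner ℂ (SU y ξ) (ι η) : ℂ) = inner ℂ (ι ξ) (SU y η)) ∧
      (∀ (y : M) (ψ : H),
        (∃ ξ : W, SU y ξ + Complex.I • ι ξ = ψ) ∧
        (∃ ξ : W, SU y ξ - Complex.I • ι ξ = ψ)) ∧
      (∀ (y : M) (ξ : W), ‖SU y ξ - S x ξ‖ ≤ a * ‖S x ξ‖) ∧
      (∀ y : M, Function.Bijective ⇑(SU y) ∧
        ∀ ξ : W, ‖ι ξ‖ ≤ (1 - a)⁻¹ * c * ‖SU y ξ‖) := by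
  classical
  set A := closure U with hA
  have hAclosed : IsClosed A := isClosed_closure
  have hxA : x ∈ A := subset_closure hx
  have hAne : A.Nonempty := ⟨x, hxA⟩
  -- ### Step 1: the deficiency operators `S x ± i ι` are bijective.
  have hreal : ∀ ξ : W, ((inner ℂ (S x ξ) (ι ξ) : ℂ)).im = 0 := by
    intro ξ
    have h1 := h_symm x hxA ξ ξ
    have h2 : (inner ℂ (ι ξ) (S x ξ) : ℂ) = (starRingEnd ℂ) (inner ℂ (S x ξ) (ι ξ)) :=
      (inner_conj_symm _ _).symm
    rw [h2] at h1
    exact Complex.conj_eq_iff_im.mp h1.symm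
  have key_norm : ∀ (μ : ℂ), μ.re = 0 → ‖μ‖ = 1 → ∀ ξ : W,
      ‖S x ξ + μ • ι ξ‖ ^ 2 = ‖S x ξ‖ ^ 2 + ‖ι ξ‖ ^ 2 := by
    intro μ hre hnorm ξ
    have h1 := norm_add_sq (𝕜 := ℂ) (S x ξ) (μ • ι ξ)
    have h2 : (inner ℂ (S x ξ) (μ • ι ξ) : ℂ) = μ * inner ℂ (S x ξ) (ι ξ) :=
      inner_smul_right _ _ _
    have h3 : ((inner ℂ (S x ξ) (μ • ι ξ) : ℂ)).re = 0 := by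
      rw [h2, Complex.mul_re, hre, hreal ξ]
      ring
    have h4 : ‖μ • ι ξ‖ = ‖ι ξ‖ := by
      rw [norm_smul, hnorm, one_mul]
    rw [h4] at h1
    simpa [h3] using h1
  have key_le : ∀ (μ : ℂ), μ.re = 0 → ‖μ‖ = 1 → ∀ ξ : W,
      ‖S x ξ‖ ≤ ‖S x ξ + μ • ι ξ‖ := by
    intro μ hre hnorm ξ
    have h1 := key_norm μ hre hnorm ξ
    nlinarith [norm_nonneg (S x ξ + μ • ι ξ), norm_nonneg (S x ξ), norm_nonneg (ι ξ)]
  have key_bij : ∀ (μ : ℂ), μ.re = 0 → ‖μ‖ = 1 →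
      (∀ ψ : H, ∃ ξ : W, S x ξ + μ • ι ξ = ψ) →
      Function.Bijective ⇑(S x + μ • ι) := by
    intro μ hre hnorm hsurj
    constructor
    · intro ξ η hh
      have h0 : (S x + μ • ι) (ξ - η) = 0 := by
        rw [map_sub, hh, sub_self]
      have h1 : S x (ξ - η) + μ • ι (ξ - η) = 0 := by
        simpa [ContinuousLinearMap.add_apply, ContinuousLinearMap.smul_apply] using h0
      have h2 := key_norm μ hre hnorm (ξ - η)
      rw [h1] at h2
      simp only [norm_zero] at h2
      have h3 : ‖ι (ξ - η)‖ = 0 := by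
        nlinarith [norm_nonneg (S x (ξ - η)), norm_nonneg (ι (ξ - η))]
      have h4 : ι (ξ - η) = 0 := norm_eq_zero.mp h3
      have h5 : ξ - η = 0 := by
        apply hι_inj
        rw [h4, map_zero]
      exact sub_eq_zero.mp h5
    · intro ψ
      obtain ⟨ξ, hξ⟩ := hsurj ψ
      exact ⟨ξ, by simpa [ContinuousLinearMap.add_apply, ContinuousLinearMap.smul_apply] using hξ⟩
  have hIre : (Complex.I).re = 0 := Complex.I_re
  have hIn : ‖Complex.I‖ = 1 := by simp
  have hnIre : (-Complex.I).re = 0 := by simp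
  have hnIn : ‖-Complex.I‖ = 1 := by simp
  have bij_plus : Function.Bijective ⇑(S x + Complex.I • ι) :=
    key_bij Complex.I hIre hIn (fun ψ => (h_sa x hxA ψ).1)
  have bij_minus : Function.Bijective ⇑(S x + (-Complex.I) • ι) := by
    refine key_bij (-Complex.I) hnIre hnIn (fun ψ => ?_)
    obtain ⟨ξ, hξ⟩ := (h_sa x hxA ψ).2
    exact ⟨ξ, by rw [neg_smul, ← sub_eq_add_neg]; exact hξ⟩
  -- ### Step 2: the Dugundji-type extension.
  have hinf : ∀ z : ↥(Aᶜ), 0 < Metric.infDist z.1 A := by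
    intro z
    exact (hAclosed.notMem_iff_infDist_pos hAne).mp z.2
  have hgex : ∀ z : ↥(Aᶜ), ∃ b ∈ A, dist z.1 b < 2 * Metric.infDist z.1 A := by
    intro z
    exact (Metric.infDist_lt_iff hAne).mp (by linarith [hinf z])
  choose g hgA hgd using hgex
  set V : ↥(Aᶜ) → Set ↥(Aᶜ) :=
    fun p => Subtype.val ⁻¹' Metric.ball p.1 (Metric.infDist p.1 A / 2) with hV
  have hVopen : ∀ p, IsOpen (V p) := fun p => Metric.isOpen_ball.preimage continuous_subtype_val
  have hVmem : ∀ p, p ∈ V p := by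
    intro p
    simp only [hV, Set.mem_preimage, Metric.mem_ball, dist_self]
    linarith [hinf p]
  obtain ⟨ρ, hρ⟩ := PartitionOfUnity.exists_isSubordinate isClosed_univ V hVopen
    (fun z _ => Set.mem_iUnion.mpr ⟨z, hVmem z⟩)
  set val : ↥(Aᶜ) → (W →L[ℂ] H) := fun z => ∑ᶠ p, ρ p z • S (g p) with hvaldef
  have hval : ∀ z, val z = ∑ p ∈ ρ.finsupport z, ρ p z • S (g p) := by
    intro z
    exact (ρ.sum_finsupport_smul_eq_finsum (x₀ := z) (φ := fun p _ => S (g p))).symm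
  have hsum1 : ∀ z, ∑ p ∈ ρ.finsupport z, ρ p z = 1 :=
    fun z => ρ.sum_finsupport (Set.mem_univ z)
  have hdiff : ∀ z (T₀ : W →L[ℂ] H),
      val z - T₀ = ∑ p ∈ ρ.finsupport z, ρ p z • (S (g p) - T₀) := by
    intro z T₀
    rw [hval z]
    simp only [smul_sub, Finset.sum_sub_distrib, ← Finset.sum_smul, hsum1 z, one_smul]
  -- operator-norm convex-combination bound
  have hbound : ∀ z (T₀ : W →L[ℂ] H) (C : ℝ),
      (∀ p ∈ ρ.finsupport z, ‖S (g p) - T₀‖ ≤ C) → ‖val z - T₀‖ ≤ C := by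
    intro z T₀ C hC
    rw [hdiff z T₀]
    calc ‖∑ p ∈ ρ.finsupport z, ρ p z • (S (g p) - T₀)‖
        ≤ ∑ p ∈ ρ.finsupport z, ‖ρ p z • (S (g p) - T₀)‖ := norm_sum_le _ _
      _ = ∑ p ∈ ρ.finsupport z, ρ p z * ‖S (g p) - T₀‖ := by
          refine Finset.sum_congr rfl fun p _ => ?_
          rw [norm_smul (ρ p z) (S (g p) - T₀)]
          simp [Real.norm_eq_abs, abs_of_nonneg (ρ.nonneg p z)]
      _ ≤ ∑ p ∈ ρ.finsupport z, ρ p z * C := by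
          refine Finset.sum_le_sum fun p hp => ?_
          exact mul_le_mul_of_nonneg_left (hC p hp) (ρ.nonneg p z)
      _ = C := by rw [← Finset.sum_mul, hsum1 z, one_mul]
  -- pointwise convex-combination bound
  have hbound_pt : ∀ z (T₀ : W →L[ℂ] H) (ξ : W) (C : ℝ),
      (∀ p ∈ ρ.finsupport z, ‖S (g p) ξ - T₀ ξ‖ ≤ C) → ‖(val z) ξ - T₀ ξ‖ ≤ C := by
    intro z T₀ ξ C hC
    have h1 : (val z) ξ - T₀ ξ = ∑ p ∈ ρ.finsupport z, ρ p z • (S (g p) ξ - T₀ ξ) := by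
      have := congrArg (fun (T : W →L[ℂ] H) => T ξ) (hdiff z T₀)
      simpa [ContinuousLinearMap.sub_apply, ContinuousLinearMap.sum_apply,
        ContinuousLinearMap.smul_apply, smul_sub] using this
    rw [h1]
    calc ‖∑ p ∈ ρ.finsupport z, ρ p z • (S (g p) ξ - T₀ ξ)‖
        ≤ ∑ p ∈ ρ.finsupport z, ‖ρ p z • (S (g p) ξ - T₀ ξ)‖ := norm_sum_le _ _
      _ = ∑ p ∈ ρ.finsupport z, ρ p z * ‖S (g p) ξ - T₀ ξ‖ := by
          refine Finset.sum_congr rfl fun p _ => ?_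
          rw [norm_smul (ρ p z) (S (g p) ξ - T₀ ξ)]
          simp [Real.norm_eq_abs, abs_of_nonneg (ρ.nonneg p z)]
      _ ≤ ∑ p ∈ ρ.finsupport z, ρ p z * C := by
          refine Finset.sum_le_sum fun p hp => ?_
          exact mul_le_mul_of_nonneg_left (hC p hp) (ρ.nonneg p z)
      _ = C := by rw [← Finset.sum_mul, hsum1 z, one_mul]
  -- symmetry of `val z`
  have hsym_val : ∀ z (ξ η : W), (inner ℂ ((val z) ξ) (ι η) : ℂ) = inner ℂ (ι ξ) ((val z) η) := by
    intro z ξ η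
    have h1 : (val z) ξ = ∑ p ∈ ρ.finsupport z, ρ p z • (S (g p) ξ) := by
      rw [hval z]
      simp [ContinuousLinearMap.sum_apply, ContinuousLinearMap.smul_apply]
    have h2 : (val z) η = ∑ p ∈ ρ.finsupport z, ρ p z • (S (g p) η) := by
      rw [hval z]
      simp [ContinuousLinearMap.sum_apply, ContinuousLinearMap.smul_apply]
    rw [h1, h2, sum_inner, inner_sum]
    refine Finset.sum_congr rfl fun p _ => ?_
    rw [RCLike.real_smul_eq_coe_smul (K := ℂ), RCLike.real_smul_eq_coe_smul (K := ℂ),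
      inner_smul_left, inner_smul_right, h_symm (g p) (hgA p) ξ η]
    simp [Complex.conj_ofReal]
  -- the estimate on supports: points in the support have `g p` close to any `a₀ ∈ A`.
  have hsupp_dist : ∀ (z : ↥(Aᶜ)) (p : ↥(Aᶜ)), p ∈ ρ.finsupport z →
      ∀ a₀ ∈ A, dist (g p) a₀ ≤ 6 * dist z.1 a₀ := by
    intro z p hp a₀ ha₀
    have h1 : z ∈ Function.support (ρ p) := (ρ.mem_finsupport z).mp hp
    have h2 : z ∈ V p := hρ p (subset_closure h1)
    have h3 : dist z.1 p.1 < Metric.infDist p.1 A / 2 := by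
      exact h2
    have h4 : Metric.infDist p.1 A ≤ Metric.infDist z.1 A + dist p.1 z.1 :=
      Metric.infDist_le_infDist_add_dist
    have h5 : Metric.infDist z.1 A ≤ dist z.1 a₀ := Metric.infDist_le_dist_of_mem ha₀
    have h6 : dist p.1 z.1 = dist z.1 p.1 := dist_comm _ _
    have h7 : Metric.infDist p.1 A ≤ 2 * dist z.1 a₀ := by linarith
    have h8 : dist p.1 (g p) < 2 * Metric.infDist p.1 A := hgd p
    calc dist (g p) a₀ ≤ dist (g p) p.1 + dist p.1 z.1 + dist z.1 a₀ :=
          dist_triangle4 _ _ _ _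
      _ = dist p.1 (g p) + dist z.1 p.1 + dist z.1 a₀ := by rw [dist_comm (g p) p.1, h6]
      _ ≤ 2 * Metric.infDist p.1 A + Metric.infDist p.1 A / 2 + dist z.1 a₀ := by linarith
      _ ≤ 6 * dist z.1 a₀ := by linarith [Metric.infDist_nonneg (x := p.1) (s := A)]
  -- ### Step 3: definition of `SU` and its properties.
  set SU : M → (W →L[ℂ] H) := fun y => if h : y ∈ A then S y else val ⟨y, h⟩ with hSU
  have hSU_eqA : ∀ y ∈ A, SU y = S y := fun y hy => dif_pos hy
  have hSU_eqC : ∀ (y : M) (hy : ¬ y ∈ A), SU y = val ⟨y, hy⟩ := fun y hy => dif_neg hy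
  -- small perturbation bound, globally
  have hsmall_all : ∀ (y : M) (ξ : W), ‖SU y ξ - S x ξ‖ ≤ a * ‖S x ξ‖ := by
    intro y ξ
    by_cases hy : y ∈ A
    · rw [hSU_eqA y hy]; exact h_small y hy ξ
    · rw [hSU_eqC y hy]
      exact hbound_pt ⟨y, hy⟩ (S x) ξ (a * ‖S x ξ‖)
        (fun p _ => h_small (g p) (hgA p) ξ)
  -- symmetry, globally
  have hsym_all : ∀ (y : M) (ξ η : W), (inner ℂ (SU y ξ) (ι η) : ℂ) = inner ℂ (ι ξ) (SU y η) := by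
    intro y ξ η
    by_cases hy : y ∈ A
    · rw [hSU_eqA y hy]; exact h_symm y hy ξ η
    · rw [hSU_eqC y hy]; exact hsym_val ⟨y, hy⟩ ξ η
  -- bijectivity of `SU y` for all `y`
  have hbij_all : ∀ y : M, Function.Bijective ⇑(SU y) := by
    intro y
    exact aux_neumann (S x) (SU y) hx_bij a ha0 ha1 (hsmall_all y)
  -- bijectivity of the shifted operators
  have hbij_pm : ∀ (y : M) (μ : ℂ), μ.re = 0 → ‖μ‖ = 1 →
      Function.Bijective ⇑(S x + μ • ι) → Function.Bijective ⇑(SU y + μ • ι) := by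
    intro y μ hre hnorm hbijE
    refine aux_neumann (S x + μ • ι) (SU y + μ • ι) hbijE a ha0 ha1 (fun ξ => ?_)
    have h1 : (SU y + μ • ι) ξ - (S x + μ • ι) ξ = SU y ξ - S x ξ := by
      simp [ContinuousLinearMap.add_apply, ContinuousLinearMap.smul_apply]
    rw [h1]
    calc ‖SU y ξ - S x ξ‖ ≤ a * ‖S x ξ‖ := hsmall_all y ξ
      _ ≤ a * ‖S x ξ + μ • ι ξ‖ := by
          have := key_le μ hre hnorm ξ
          nlinarith
      _ = a * ‖(S x + μ • ι) ξ‖ := by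
          simp [ContinuousLinearMap.add_apply, ContinuousLinearMap.smul_apply]
  -- ### Step 4: continuity of `SU`.
  have hvalcont : Continuous val := by
    refine ρ.continuous_finsum_smul (fun p z hz => continuousAt_const)
  have hcontSU : Continuous SU := by
    rw [continuous_iff_continuousAt]
    intro y
    by_cases hy : y ∈ A
    · -- boundary / interior of `A`: metric estimate
      rw [Metric.continuousAt_iff]
      intro ε hε
      have hccw : ContinuousWithinAt S A y := hS_cont y hy
      rw [Metric.continuousWithinAt_iff] at hccw
      obtain ⟨δ, hδ0, hδ⟩ := hccw (ε / 2) (by linarith)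
      refine ⟨δ / 6, by linarith, fun {y'} hy' => ?_⟩
      by_cases hy'A : y' ∈ A
      · rw [hSU_eqA y' hy'A, hSU_eqA y hy]
        have : dist y' y < δ := by linarith [hy']
        have h2 := hδ hy'A this
        linarith
      · rw [hSU_eqC y' hy'A, hSU_eqA y hy]
        set z : ↥(Aᶜ) := ⟨y', hy'A⟩ with hz
        have h1 : ‖val z - S y‖ ≤ ε / 2 := by
          refine hbound z (S y) (ε / 2) (fun p hp => ?_)
          have h2 : dist (g p) y ≤ 6 * dist z.1 y := hsupp_dist z p hp y hy
          have h3 : dist z.1 y < δ / 6 := hy'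
          have h4 : dist (g p) y < δ := by linarith
          have h5 := hδ (hgA p) h4
          rw [dist_eq_norm] at h5
          linarith
        rw [dist_eq_norm]
        calc ‖val z - S y‖ ≤ ε / 2 := h1
          _ < ε := by linarith
    · -- interior of the complement
      have hopen : IsOpen Aᶜ := hAclosed.isOpen_compl
      have hrestr : ContinuousOn SU Aᶜ := by
        rw [continuousOn_iff_continuous_restrict]
        have : (Aᶜ).domRestrict SU = val := by
          funext z
          exact hSU_eqC z.1 z.2
        rw [this]
        exact hvalcont
      exact hrestr.continuousAt (hopen.mem_nhds hy)
  -- ### Step 5: conclusion.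
  refine ⟨SU, hcontSU, hSU_eqA, hsym_all, ?_, hsmall_all, ?_⟩
  · intro y ψ
    constructor
    · obtain ⟨ξ, hξ⟩ := (hbij_pm y Complex.I hIre hIn bij_plus).2 ψ
      exact ⟨ξ, by simpa [ContinuousLinearMap.add_apply,
        ContinuousLinearMap.smul_apply] using hξ⟩
    · obtain ⟨ξ, hξ⟩ := (hbij_pm y (-Complex.I) hnIre hnIn bij_minus).2 ψ
      refine ⟨ξ, ?_⟩
      have : SU y ξ + (-Complex.I) • ι ξ = ψ := by
        simpa [ContinuousLinearMap.add_apply, ContinuousLinearMap.smul_apply] using hξ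
      rw [neg_smul, ← sub_eq_add_neg] at this
      exact this
  · intro y
    refine ⟨hbij_all y, fun ξ => ?_⟩
    by_cases hξ : ξ = 0
    · subst hξ
      simp
    · have hι0 : ι ξ ≠ 0 := fun h0 => hξ (hι_inj (by rw [h0, map_zero]))
      have hι0' : 0 < ‖ι ξ‖ := norm_pos_iff.mpr hι0
      have hca := hc ξ
      have hc0 : 0 < c := by
        nlinarith [norm_nonneg (S x ξ)]
      have h1a : (0:ℝ) < 1 - a := by linarith
      have hs1 : ‖S x ξ‖ - ‖SU y ξ‖ ≤ a * ‖S x ξ‖ := by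
        have h2 : ‖S x ξ‖ - ‖SU y ξ‖ ≤ ‖S x ξ - SU y ξ‖ := norm_sub_norm_le _ _
        have h3 : ‖S x ξ - SU y ξ‖ = ‖SU y ξ - S x ξ‖ := norm_sub_rev _ _
        linarith [hsmall_all y ξ]
      have hs2 : (1 - a) * ‖S x ξ‖ ≤ ‖SU y ξ‖ := by linarith
      have hs3 : ‖S x ξ‖ ≤ (1 - a)⁻¹ * ‖SU y ξ‖ := by
        rw [inv_mul_eq_div, le_div_iff₀ h1a]
        nlinarith [hs2]
      calc ‖ι ξ‖ ≤ c * ‖S x ξ‖ := hca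
        _ ≤ c * ((1 - a)⁻¹ * ‖SU y ξ‖) := by
            exact mul_le_mul_of_nonneg_left hs3 (le_of_lt hc0)
        _ = (1 - a)⁻¹ * c * ‖SU y ξ‖ := by ring
end

section
/- Let T be a self-adjoint operator on a complex Hilbert space H with domain W such that T : W → H is bijective with bounded everywhere-defined inverse T⁻¹. Let S be a symmetric operator with domain W, and let a ∈ [0,1) satisfy ‖(S − T)ξ‖ ≤ a‖Tξ‖ for all ξ ∈ W (equivalently, ‖(S−T)T⁻¹‖ ≤ a). Then S is self-adjoint with domain W, S : W → H is bijective with bounded inverse, ‖T(S⁻¹ψ)‖ ≤ (1−a)⁻¹‖ψ‖ for all ψ ∈ H, and ‖S⁻¹‖ ≤ (1−a)⁻¹‖T⁻¹‖. [Perturbation claim used in the proofs of Lemma 3.7 (uegn), Lemma 3.9 (extension) and Lemma 4.3 (inv_glob), combining the Kato–Rellich theorem with a Neumann series argument.] -/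
open Filter Topology

/-- Neumann series surjectivity helper. -/
lemma neumann_surj_aux
    {H : Type*} [NormedAddCommGroup H] [NormedSpace ℂ H] [CompleteSpace H]
    {W : Type*} [NormedAddCommGroup W] [NormedSpace ℂ W] [CompleteSpace W]
    (T A D : W →L[ℂ] H) (Tinv : H →L[ℂ] W)
    (hTinv2 : ∀ ξ : W, Tinv (T ξ) = ξ)
    (hA_surj : Function.Surjective A)
    (hA_norm : ∀ ξ : W, ‖T ξ‖ ≤ ‖A ξ‖)
    (a : ℝ) (ha0 : 0 ≤ a) (ha1 : a < 1)
    (hD : ∀ ξ : W, ‖D ξ‖ ≤ a * ‖T ξ‖) :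
    ∀ ψ : H, ∃ ξ : W, A ξ + D ξ = ψ := by
  have hA_inj : Function.Injective A := by
    intro ξ η h
    have h0 : A (ξ - η) = 0 := by simp [map_sub, h]
    have hT0 : T (ξ - η) = 0 := by
      have := hA_norm (ξ - η)
      rw [h0, norm_zero] at this
      exact norm_le_zero_iff.mp this
    have := hTinv2 (ξ - η)
    rw [hT0, map_zero] at this
    exact sub_eq_zero.mp this.symm
  let e : W ≃ₗ[ℂ] H := LinearEquiv.ofBijective (A : W →ₗ[ℂ] H) ⟨hA_inj, hA_surj⟩
  have he : ∀ ψ : H, A (e.symm ψ) = ψ := fun ψ => e.apply_symm_apply ψ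
  have hbound : ∀ ψ : H, ‖D (e.symm ψ)‖ ≤ a * ‖ψ‖ := by
    intro ψ
    calc ‖D (e.symm ψ)‖ ≤ a * ‖T (e.symm ψ)‖ := hD _
    _ ≤ a * ‖A (e.symm ψ)‖ := by
        exact mul_le_mul_of_nonneg_left (hA_norm _) ha0
    _ = a * ‖ψ‖ := by rw [he]
  let B : H →L[ℂ] H :=
    ((D : W →ₗ[ℂ] H).comp e.symm.toLinearMap).mkContinuous a hbound
  have hB_apply : ∀ ψ : H, B ψ = D (e.symm ψ) := fun _ => rfl
  have hBnorm : ‖(-B : H →L[ℂ] H)‖ < 1 := by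
    rw [norm_neg]
    calc ‖B‖ ≤ a := (B : H →L[ℂ] H).opNorm_le_bound ha0 (fun ψ => hbound ψ)
    _ < 1 := ha1
  let u : (H →L[ℂ] H)ˣ := Units.oneSub (-B) hBnorm
  intro ψ
  refine ⟨e.symm ((↑u⁻¹ : H →L[ℂ] H) ψ), ?_⟩
  have huu : (↑u : H →L[ℂ] H) ((↑u⁻¹ : H →L[ℂ] H) ψ) = ψ := by
    have := u.mul_inv
    calc (↑u : H →L[ℂ] H) ((↑u⁻¹ : H →L[ℂ] H) ψ)
        = ((↑u * ↑u⁻¹ : H →L[ℂ] H)) ψ := rfl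
    _ = ψ := by rw [this]; rfl
  have hu_val : (↑u : H →L[ℂ] H) = 1 + B := by
    show (1 : H →L[ℂ] H) - (-B) = 1 + B
    rw [sub_neg_eq_add]
  rw [he, ← hB_apply]
  have := huu
  rw [hu_val] at this
  simpa using this

/-- Kato–Rellich + Neumann series perturbation claim used in
Lemmas 3.7, 3.9 and 4.3.
`T` is a self-adjoint operator on `H` with dense domain `W` (abstract encoding: `W` a
complete normed space with injective dense inclusion `ι : W →L[ℂ] H`; self-adjointness
= symmetry plus surjectivity of `T ± i`), bijective `W → H` with bounded
everywhere-defined inverse `Tinv` (valued in `W`).  `S` is symmetric with domain `W` and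
`‖(S − T)ξ‖ ≤ a‖Tξ‖` for all `ξ ∈ W`, where `a ∈ [0,1)`.  Then `S` is self-adjoint with
domain `W` (i.e. `S ± i` are surjective), `S : W → H` is bijective,
`‖T (S⁻¹ ψ)‖ ≤ (1−a)⁻¹‖ψ‖` (i.e. `‖Tξ‖ ≤ (1−a)⁻¹‖Sξ‖`), and
`‖S⁻¹‖ ≤ (1−a)⁻¹‖T⁻¹‖` (i.e. `‖ι ξ‖ ≤ (1−a)⁻¹‖ι ∘ Tinv‖‖Sξ‖`). -/
theorem kato_rellich_neumann
    {H : Type*} [NormedAddCommGroup H] [InnerProductSpace ℂ H] [CompleteSpace H]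
    {W : Type*} [NormedAddCommGroup W] [NormedSpace ℂ W] [CompleteSpace W]
    (ι : W →L[ℂ] H) (hι_inj : Function.Injective ι) (hι_dense : DenseRange ι)
    (T : W →L[ℂ] H)
    (hT_symm : ∀ ξ η : W, (inner ℂ (T ξ) (ι η) : ℂ) = inner ℂ (ι ξ) (T η))
    (hT_sa : ∀ ψ : H,
      (∃ ξ : W, T ξ + Complex.I • ι ξ = ψ) ∧ (∃ ξ : W, T ξ - Complex.I • ι ξ = ψ))
    (Tinv : H →L[ℂ] W)
    (hTinv1 : ∀ ψ : H, T (Tinv ψ) = ψ)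
    (hTinv2 : ∀ ξ : W, Tinv (T ξ) = ξ)
    (S : W →L[ℂ] H)
    (hS_symm : ∀ ξ η : W, (inner ℂ (S ξ) (ι η) : ℂ) = inner ℂ (ι ξ) (S η))
    (a : ℝ) (ha0 : 0 ≤ a) (ha1 : a < 1)
    (hST : ∀ ξ : W, ‖S ξ - T ξ‖ ≤ a * ‖T ξ‖) :
    (∀ ψ : H,
      (∃ ξ : W, S ξ + Complex.I • ι ξ = ψ) ∧ (∃ ξ : W, S ξ - Complex.I • ι ξ = ψ)) ∧
    Function.Bijective ⇑S ∧
    (∀ ξ : W, ‖T ξ‖ ≤ (1 - a)⁻¹ * ‖S ξ‖) ∧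
    (∀ ξ : W, ‖ι ξ‖ ≤ (1 - a)⁻¹ * ‖(ι.comp Tinv : H →L[ℂ] H)‖ * ‖S ξ‖) := by
  have h1a : (0:ℝ) < 1 - a := by linarith
  -- key lower bound
  have hTS : ∀ ξ : W, ‖T ξ‖ ≤ (1 - a)⁻¹ * ‖S ξ‖ := by
    intro ξ
    have h1 : ‖T ξ‖ - ‖S ξ - T ξ‖ ≤ ‖S ξ‖ := by
      have := norm_sub_norm_le (T ξ) (T ξ - S ξ)
      have h2 : T ξ - (T ξ - S ξ) = S ξ := by abel
      rw [h2] at this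
      rw [← norm_neg (S ξ - T ξ)]
      simpa [neg_sub] using this
    have h3 : (1 - a) * ‖T ξ‖ ≤ ‖S ξ‖ := by
      have := hST ξ
      nlinarith [norm_nonneg (T ξ)]
    rw [le_inv_mul_iff₀ h1a]
    exact h3
  -- cross-term reality
  have hreal : ∀ ξ : W, (Complex.im (inner ℂ (T ξ) (ι ξ) : ℂ)) = 0 := by
    intro ξ
    have h := hT_symm ξ ξ
    have h2 : (inner ℂ (ι ξ) (T ξ) : ℂ) = (starRingEnd ℂ) (inner ℂ (T ξ) (ι ξ)) :=
      (inner_conj_symm _ _).symm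
    rw [h2] at h
    have := Complex.conj_eq_iff_im.mp h.symm
    exact this
  -- ‖Tξ‖ ≤ ‖Tξ ± i ιξ‖
  have hnorm : ∀ (c : ℂ) (hc : c.re = 0 ∧ ‖c‖ = 1) (ξ : W),
      ‖T ξ‖ ≤ ‖T ξ + c • ι ξ‖ := by
    intro c hc ξ
    have hsq : ‖T ξ + c • ι ξ‖ ^ 2 = ‖T ξ‖ ^ 2 + ‖ι ξ‖ ^ 2 := by
      rw [@norm_add_sq ℂ]
      have hinner : (inner ℂ (T ξ) (c • ι ξ) : ℂ) = c * inner ℂ (T ξ) (ι ξ) :=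
        inner_smul_right _ _ _
      have hre : Complex.re (c * (inner ℂ (T ξ) (ι ξ) : ℂ)) = 0 := by
        rw [Complex.mul_re, hc.1, hreal ξ]
        ring
      rw [hinner]
      have : RCLike.re (c * (inner ℂ (T ξ) (ι ξ) : ℂ)) = 0 := hre
      rw [this, norm_smul, hc.2]
      ring
    have : ‖T ξ‖ ^ 2 ≤ ‖T ξ + c • ι ξ‖ ^ 2 := by
      rw [hsq]; nlinarith [norm_nonneg (ι ξ)]
    exact le_of_pow_le_pow_left₀ two_ne_zero (norm_nonneg _) this
  have hDST : ∀ ξ : W, ‖(S - T) ξ‖ ≤ a * ‖T ξ‖ := by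
    intro ξ; simpa using hST ξ
  -- plus case
  have hplus : ∀ ψ : H, ∃ ξ : W, S ξ + Complex.I • ι ξ = ψ := by
    intro ψ
    obtain ⟨ξ, hξ⟩ := neumann_surj_aux T (T + Complex.I • ι) (S - T) Tinv hTinv2
      (by
        intro φ
        obtain ⟨ξ, hξ⟩ := (hT_sa φ).1
        exact ⟨ξ, by simpa using hξ⟩)
      (by
        intro ξ
        have := hnorm Complex.I ⟨by simp, by simp⟩ ξ
        simpa using this)
      a ha0 ha1 hDST ψ
    refine ⟨ξ, ?_⟩
    simp only [ContinuousLinearMap.add_apply, ContinuousLinearMap.sub_apply,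
      ContinuousLinearMap.smul_apply] at hξ
    rw [← hξ]; abel
  have hminus : ∀ ψ : H, ∃ ξ : W, S ξ - Complex.I • ι ξ = ψ := by
    intro ψ
    obtain ⟨ξ, hξ⟩ := neumann_surj_aux T (T - Complex.I • ι) (S - T) Tinv hTinv2
      (by
        intro φ
        obtain ⟨ξ, hξ⟩ := (hT_sa φ).2
        exact ⟨ξ, by simpa using hξ⟩)
      (by
        intro ξ
        have := hnorm (-Complex.I) ⟨by simp, by simp⟩ ξ
        simp only [neg_smul] at this
        simpa [sub_eq_add_neg] using this)
      a ha0 ha1 hDST ψ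
    refine ⟨ξ, ?_⟩
    simp only [ContinuousLinearMap.sub_apply, ContinuousLinearMap.smul_apply] at hξ
    rw [← hξ]; abel
  -- bijectivity of S
  have hS_surj : Function.Surjective S := by
    intro ψ
    obtain ⟨ξ, hξ⟩ := neumann_surj_aux T T (S - T) Tinv hTinv2
      (fun φ => ⟨Tinv φ, hTinv1 φ⟩) (fun ξ => le_refl _) a ha0 ha1 hDST ψ
    refine ⟨ξ, ?_⟩
    simp only [ContinuousLinearMap.sub_apply] at hξ
    rw [← hξ]; abel
  have hS_inj : Function.Injective S := by
    intro ξ η h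
    have h0 : S (ξ - η) = 0 := by simp [map_sub, h]
    have hT0 : T (ξ - η) = 0 := by
      have := hTS (ξ - η)
      rw [h0, norm_zero, mul_zero] at this
      exact norm_le_zero_iff.mp this
    have := hTinv2 (ξ - η)
    rw [hT0, map_zero] at this
    exact sub_eq_zero.mp this.symm
  refine ⟨fun ψ => ⟨hplus ψ, hminus ψ⟩, ⟨hS_inj, hS_surj⟩, hTS, ?_⟩
  intro ξ
  have h1 : ‖ι ξ‖ ≤ ‖(ι.comp Tinv : H →L[ℂ] H)‖ * ‖T ξ‖ := by
    have : ι ξ = (ι.comp Tinv) (T ξ) := by simp [hTinv2]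
    rw [this]
    exact (ι.comp Tinv).le_opNorm _
  calc ‖ι ξ‖ ≤ ‖(ι.comp Tinv : H →L[ℂ] H)‖ * ‖T ξ‖ := h1
  _ ≤ ‖(ι.comp Tinv : H →L[ℂ] H)‖ * ((1 - a)⁻¹ * ‖S ξ‖) :=
      mul_le_mul_of_nonneg_left (hTS ξ) (norm_nonneg _)
  _ = (1 - a)⁻¹ * ‖(ι.comp Tinv : H →L[ℂ] H)‖ * ‖S ξ‖ := by ring
end

section
/- Assume the family {S(x)}_{x∈X} satisfies assumptions (a1), (a2) and (a3) with compact set K ⊆ X. Let f : X → (0,∞) be a continuous strictly positive function vanishing at infinity with f(x) = 1 for all x ∈ K. For each x ∈ X the operator f(x)⁻¹S(x) is self-adjoint with domain W, so (f(x)⁻¹S(x) + i)⁻¹ is an everywhere-defined bounded operator. Then the map x ↦ (f(x)⁻¹S(x) + i)⁻¹ is norm-continuous, takes values in the compact operators on H, and vanishes in operator norm at infinity (for every ε > 0 there is a compact set C ⊆ X with ‖(f(x)⁻¹S(x)+i)⁻¹‖ < ε for x ∉ C); i.e. it defines an element of C₀(X, K(H)), so the rescaled operator f⁻¹S(·) has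 compact resolvent as an operator on the Hilbert C₀(X)-module C₀(X,H). [Hilbert-space content of Lemma 3.10 (pS_cpt_res).] -/
open Filter Topology

/-- Hilbert-space content of Lemma 3.10, `pS_cpt_res`.
Setup as in Statement 2, with assumptions (a1) (`hι_cpt`), (a2) (`hS_cont`) and (a3)
(`K`, `c`, `Sinv`) for the family `{S(x)}_{x∈X}` of self-adjoint operators with common
dense domain `W` (self-adjointness = symmetry plus surjectivity of `S x ± i`).
Let `f : X → (0,∞)` be continuous, strictly positive, vanishing at infinity, with
`f = 1` on `K`.  Each `f(x)⁻¹ S(x)` is self-adjoint with domain `W`, with resolvent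
`Rf x = (f(x)⁻¹S(x) + i)⁻¹` (valued in `W`).  Then `x ↦ (f(x)⁻¹S(x)+i)⁻¹` is
norm-continuous, takes values in the compact operators on `H`, and vanishes in operator
norm at infinity; i.e. it defines an element of `C₀(X, K(H))`. -/
theorem pS_cpt_res
    {X : Type*} [TopologicalSpace X] [LocallyCompactSpace X] [T2Space X]
    {H : Type*} [NormedAddCommGroup H] [InnerProductSpace ℂ H] [CompleteSpace H]
    {W : Type*} [NormedAddCommGroup W] [NormedSpace ℂ W] [CompleteSpace W]
    (ι : W →L[ℂ] H) (hι_inj : Function.Injective ι) (hι_dense : DenseRange ι)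
    (hι_cpt : IsCompactOperator ⇑ι)
    (S : X → (W →L[ℂ] H))
    (x₀ : X) (h_graph : ∀ ξ : W, ‖ξ‖ ^ 2 = ‖ι ξ‖ ^ 2 + ‖S x₀ ξ‖ ^ 2)
    (h_symm : ∀ (x : X) (ξ η : W), (inner ℂ (S x ξ) (ι η) : ℂ) = inner ℂ (ι ξ) (S x η))
    (h_sa : ∀ (x : X) (ψ : H),
      (∃ ξ : W, S x ξ + Complex.I • ι ξ = ψ) ∧ (∃ ξ : W, S x ξ - Complex.I • ι ξ = ψ))
    (hS_cont : Continuous S)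
    (K : Set X) (hK : IsCompact K)
    (c : ℝ) (hc : 0 < c)
    (Sinv : X → (H →L[ℂ] W))
    (hSinv1 : ∀ x ∉ K, ∀ ψ : H, S x (Sinv x ψ) = ψ)
    (hSinv2 : ∀ x ∉ K, ∀ ξ : W, Sinv x (S x ξ) = ξ)
    (hSinv_bdd : ∀ x ∉ K, ∀ ψ : H, ‖ι (Sinv x ψ)‖ ≤ c * ‖ψ‖)
    (f : X → ℝ) (hf_cont : Continuous f) (hf_pos : ∀ x, 0 < f x)
    (hf_zero : ∀ ε > 0, ∃ C : Set X, IsCompact C ∧ ∀ x ∉ C, |f x| < ε)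
    (hfK : ∀ x ∈ K, f x = 1)
    (Rf : X → (H →L[ℂ] W))
    (hRf1 : ∀ (x : X) (ψ : H),
      (f x)⁻¹ • S x (Rf x ψ) + Complex.I • ι (Rf x ψ) = ψ)
    (hRf2 : ∀ (x : X) (ξ : W),
      Rf x ((f x)⁻¹ • S x ξ + Complex.I • ι ξ) = ξ) :
    Continuous (fun x => (ι.comp (Rf x) : H →L[ℂ] H)) ∧
    (∀ x : X, IsCompactOperator ⇑(ι.comp (Rf x))) ∧
    (∀ ε > 0, ∃ C : Set X, IsCompact C ∧ ∀ x ∉ C,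
      ‖(ι.comp (Rf x) : H →L[ℂ] H)‖ < ε) := by

  -- Key bound: the resolvent is a contraction into H
  have hkey : ∀ x (ψ : H), ‖ι (Rf x ψ)‖ ≤ ‖ψ‖ := by
    intro x ψ
    set ξ := Rf x ψ with hξ
    have hψ := hRf1 x ψ
    have hz : (inner ℂ (S x ξ) (ι ξ) : ℂ).im = 0 := by
      have h1 := h_symm x ξ ξ
      have h2 : (inner ℂ (ι ξ) (S x ξ) : ℂ) = starRingEnd ℂ (inner ℂ (S x ξ) (ι ξ)) :=
        (inner_conj_symm _ _).symm
      rw [h2] at h1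
      have h3 := congrArg Complex.im h1
      simp only [Complex.conj_im] at h3
      linarith
    have hre : (inner ℂ ((f x)⁻¹ • S x ξ) (Complex.I • ι ξ) : ℂ).re = 0 := by
      rw [inner_smul_right, ← Complex.coe_smul, inner_smul_left, Complex.conj_ofReal]
      simp [Complex.mul_re, Complex.mul_im, hz]
    have hnorm : ‖ψ‖ ^ 2 = ‖(f x)⁻¹ • S x ξ‖ ^ 2 + ‖Complex.I • ι ξ‖ ^ 2 := by
      rw [← hψ, @norm_add_sq ℂ]
      rw [← hξ]
      have hre' : RCLike.re (inner ℂ ((f x)⁻¹ • S x ξ) (Complex.I • ι ξ) : ℂ) = 0 := hre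
      rw [hre']; simp
    have hI : ‖Complex.I • ι ξ‖ = ‖ι ξ‖ := by
      rw [norm_smul]; simp
    rw [hI] at hnorm
    nlinarith [norm_nonneg (ι ξ), norm_nonneg ψ, sq_nonneg ‖(f x)⁻¹ • S x ξ‖]
  -- the rescaled family
  set T : X → (W →L[ℂ] H) := fun x => (f x)⁻¹ • S x with hT
  have hT_apply : ∀ x (ξ : W), T x ξ = (f x)⁻¹ • S x ξ := fun x ξ => rfl
  have hT_cont : Continuous T :=
    (hf_cont.inv₀ fun x => (hf_pos x).ne').smul hS_cont
  -- resolvent identity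
  have hres : ∀ x y (ψ : H), Rf x ψ - Rf y ψ = Rf x ((T y - T x) (Rf y ψ)) := by
    intro x y ψ
    set η := Rf y ψ with hη
    have h2 := hRf2 x η
    have h3 := hRf1 y ψ
    rw [← hη] at h3
    have h4 : (T y - T x) η
        = ψ - ((f x)⁻¹ • S x η + Complex.I • ι η) := by
      rw [ContinuousLinearMap.sub_apply, hT_apply, hT_apply, ← h3]
      abel
    rw [h4, map_sub, h2]
  -- norm-continuity
  have hb : ∀ y x, ‖ι.comp (Rf x) - ι.comp (Rf y)‖ ≤ ‖T y - T x‖ * ‖Rf y‖ := by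
    intro y x
    refine ContinuousLinearMap.opNorm_le_bound _
      (mul_nonneg (norm_nonneg _) (norm_nonneg _)) fun ψ => ?_
    have hid : (ι.comp (Rf x) - ι.comp (Rf y)) ψ = ι (Rf x ((T y - T x) (Rf y ψ))) := by
      simp only [ContinuousLinearMap.sub_apply, ContinuousLinearMap.comp_apply]
      rw [← map_sub, hres x y ψ, ContinuousLinearMap.sub_apply]
    rw [hid]
    calc ‖ι (Rf x ((T y - T x) (Rf y ψ)))‖ ≤ ‖(T y - T x) (Rf y ψ)‖ := hkey x _
      _ ≤ ‖T y - T x‖ * ‖Rf y ψ‖ := ContinuousLinearMap.le_opNorm _ _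
      _ ≤ ‖T y - T x‖ * (‖Rf y‖ * ‖ψ‖) :=
          mul_le_mul_of_nonneg_left (ContinuousLinearMap.le_opNorm _ _) (norm_nonneg _)
      _ = ‖T y - T x‖ * ‖Rf y‖ * ‖ψ‖ := by ring
  refine ⟨?_, ?_, ?_⟩
  · refine continuous_iff_continuousAt.mpr fun y => ?_
    have h0 : Tendsto (fun x => ι.comp (Rf x) - ι.comp (Rf y)) (𝓝 y) (𝓝 0) := by
      apply squeeze_zero_norm (hb y)
      have h1 : Tendsto (fun x => ‖T y - T x‖ * ‖Rf y‖) (𝓝 y)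
          (𝓝 (‖T y - T y‖ * ‖Rf y‖)) :=
        (((continuous_const.sub hT_cont).norm).mul continuous_const).tendsto y
      simpa using h1
    have := h0.add_const (ι.comp (Rf y))
    simpa [ContinuousAt] using this
  · intro x
    exact hι_cpt.comp_clm (Rf x)
  · -- vanishing at infinity
    have hvan : ∀ x ∉ K, ∀ ψ : H, ‖ι (Rf x ψ)‖ ≤ 2 * c * f x * ‖ψ‖ := by
      intro x hx ψ
      set ξ := Rf x ψ with hξ
      have hψ := hRf1 x ψ
      have hSx : S x ξ = f x • (ψ - Complex.I • ι ξ) := by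
        have h5 : (f x)⁻¹ • S x ξ = ψ - Complex.I • ι ξ := by
          rw [← hψ]; abel
        calc S x ξ = f x • ((f x)⁻¹ • S x ξ) := by
              rw [smul_smul, mul_inv_cancel₀ (hf_pos x).ne', one_smul]
          _ = f x • (ψ - Complex.I • ι ξ) := by rw [h5]
      calc ‖ι ξ‖ = ‖ι (Sinv x (S x ξ))‖ := by rw [hSinv2 x hx ξ]
        _ ≤ c * ‖S x ξ‖ := hSinv_bdd x hx _
        _ = c * (f x * ‖ψ - Complex.I • ι ξ‖) := by
            rw [hSx, norm_smul, Real.norm_eq_abs, abs_of_pos (hf_pos x)]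
        _ ≤ c * (f x * (‖ψ‖ + ‖ι ξ‖)) := by
            refine mul_le_mul_of_nonneg_left (mul_le_mul_of_nonneg_left ?_ (hf_pos x).le) hc.le
            calc ‖ψ - Complex.I • ι ξ‖ ≤ ‖ψ‖ + ‖Complex.I • ι ξ‖ := norm_sub_le _ _
              _ = ‖ψ‖ + ‖ι ξ‖ := by rw [norm_smul]; simp
        _ ≤ c * (f x * (‖ψ‖ + ‖ψ‖)) := by
            refine mul_le_mul_of_nonneg_left (mul_le_mul_of_nonneg_left ?_ (hf_pos x).le) hc.le
            exact add_le_add le_rfl (hkey x ψ)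
        _ = 2 * c * f x * ‖ψ‖ := by ring
    intro ε hε
    obtain ⟨C, hC, hfC⟩ := hf_zero (ε / (2 * c)) (div_pos hε (by linarith))
    refine ⟨C ∪ K, hC.union hK, fun x hx => ?_⟩
    have hxK : x ∉ K := fun h => hx (Or.inr h)
    have hxC : x ∉ C := fun h => hx (Or.inl h)
    have hop : ‖ι.comp (Rf x)‖ ≤ 2 * c * f x :=
      ContinuousLinearMap.opNorm_le_bound _
        (mul_nonneg (by linarith) (hf_pos x).le) (fun ψ => hvan x hxK ψ)
    refine lt_of_le_of_lt hop ?_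
    have h6 := hfC x hxC
    rw [abs_of_pos (hf_pos x), lt_div_iff₀ (by linarith)] at h6
    linarith
end
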